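/- arXiv:2303.05928 — 3 statements merged into one kernel-verified Lean document; each statement's English description precedes it below -/
import Mathlib

section
/- The subsets v^{-1}(λ_v + P^+) of the weight lattice P, as v ranges over W, are pairwise disjoint: if v^{-1}(λ_v + σ) = u^{-1}(λ_u + τ) with u,v ∈ W and σ,τ ∈ P^+, then u = v and σ = τ. -/
/-!
Common setting: a finite crystallographic root system `R` with Weyl group `W` in a
Euclidean space `V` (we identify `𝔞*` with `𝔞 = V` via the inner product), a fixed set
of positive roots `Rpos`, simple roots `Pi`, fundamental weights `fw`, the weight
lattice `P`, dominant weights `Pplus`, and for a subset `I ⊆ Pi` of the simple roots the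
parabolic subgroup `W_I`, its positive roots `R_I^+`, `P_I^+`, the set `W^I` of minimal
coset representatives, lengths, the Bruhat order, the orderings `⪯`, `≤_∅`, `≤_I`, the
group algebra `ℂ[P]`, the orbit sums `m_I(λ)`, the compact torus `A` (encoded abstractly
through its normalized Haar measure and its orthonormal multiplicative characters
`e^λ = ev λ`, `λ ∈ P`), the weight function `δ_k` and the inner product `(·,·)_k`.
-/

open scoped RealInnerProductSpace BigOperators Classical
open MeasureTheory

noncomputable section

variable {V : Type*} [NormedAddCommGroup V] [InnerProductSpace ℝ V] [FiniteDimensional ℝ V]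

/-- A finite crystallographic root system in `V`, with a choice of positive roots,
the corresponding simple roots, and the fundamental weights. -/
structure RootData (V : Type*) [NormedAddCommGroup V] [InnerProductSpace ℝ V] where
  R : Finset V
  Rpos : Finset V
  Pi : Finset V
  fw : V → V
  nonzero : ∀ α ∈ R, α ≠ 0
  reflect_mem : ∀ α ∈ R, ∀ β ∈ R, β - (2 * ⟪β, α⟫ / ⟪α, α⟫) • α ∈ R
  crystallographic : ∀ α ∈ R, ∀ β ∈ R, ∃ n : ℤ, 2 * ⟪β, α⟫ / ⟪α, α⟫ = (n : ℝ)
  pos_subset : Rpos ⊆ R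
  pos_or_neg : ∀ α ∈ R, (α ∈ Rpos ↔ ¬ -α ∈ Rpos)
  simple_subset : Pi ⊆ Rpos
  pos_comb : ∀ α ∈ Rpos, ∃ c : V → ℝ, (∀ β, 0 ≤ c β) ∧ α = ∑ β ∈ Pi, c β • β
  span_R : Submodule.span ℝ (R : Set V) = ⊤
  fw_prop : ∀ α ∈ Pi, ∀ β ∈ Pi, ⟪fw α, (2 / ⟪β, β⟫) • β⟫ = (if α = β then 1 else 0)

/-- The orthogonal reflection `s_α` in the hyperplane orthogonal to `α`. -/
def rRefl (α : V) : V ≃ₗᵢ[ℝ] V := Submodule.reflection (ℝ ∙ α)ᗮ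

/-- The reflection group generated by the reflections in the elements of `S`. -/
def weylGen (S : Finset V) : Subgroup (V ≃ₗᵢ[ℝ] V) :=
  Subgroup.closure { w | ∃ α ∈ S, w = rRefl α }

namespace RootData

variable (D : RootData V)

/-- The Weyl group `W`, generated by the simple reflections. -/
def Weyl : Subgroup (V ≃ₗᵢ[ℝ] V) := Subgroup.closure { w | ∃ α ∈ D.Pi, w = rRefl α }

/-- The parabolic subgroup `W_I` generated by the simple reflections from `I ⊆ Π`. -/
abbrev WeylP (_D : RootData V) (I : Finset V) : Subgroup (V ≃ₗᵢ[ℝ] V) := weylGen I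

/-- `R_I^+ = R_I ∩ R^+`, the positive roots of the parabolic subsystem. -/
def RposI (I : Finset V) : Set V :=
  { α : V | α ∈ D.Rpos ∧ α ∈ Submodule.span ℝ (I : Set V) }

/-- `W^I = {v ∈ W ∣ v(R_I^+) ⊆ R^+}`, the minimal coset representatives of `W/W_I`. -/
def WsetI (I : Finset V) : Set (V ≃ₗᵢ[ℝ] V) :=
  { v | v ∈ D.Weyl ∧ ∀ α ∈ D.RposI I, v α ∈ D.Rpos }

/-- The weight lattice `P = {λ ∣ (λ, α^∨) ∈ ℤ for all α ∈ R}`. -/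
def P : Set V := { lam : V | ∀ α ∈ D.R, ∃ n : ℤ, 2 * ⟪lam, α⟫ / ⟪α, α⟫ = (n : ℝ) }

/-- The dominant weights `P^+`. -/
def Pplus : Set V := { lam ∈ D.P | ∀ α ∈ D.Rpos, 0 ≤ ⟪lam, α⟫ }

/-- `P^- = -P^+`. -/
def Pminus : Set V := { lam ∈ D.P | ∀ α ∈ D.Rpos, ⟪lam, α⟫ ≤ 0 }

/-- `P_I^+ = {λ ∈ P ∣ (λ,α) ≥ 0 for all α ∈ R_I^+}`. -/
def PplusI (I : Finset V) : Set V := { lam ∈ D.P | ∀ α ∈ D.RposI I, 0 ≤ ⟪lam, α⟫ }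

/-- `P_I^- = -P_I^+`. -/
def PminusI (I : Finset V) : Set V := { lam ∈ D.P | ∀ α ∈ D.RposI I, ⟪lam, α⟫ ≤ 0 }

/-- The Steinberg weight `λ_v = Σ_{α ∈ Π, v⁻¹α < 0} ϖ_α`. -/
def steinberg (v : V ≃ₗᵢ[ℝ] V) : V :=
  ∑ α ∈ D.Pi.filter (fun α => v⁻¹ α ∉ D.Rpos), D.fw α

/-- The length of `w` : the minimal length of a word in the simple reflections
expressing `w`. -/
def len (w : V ≃ₗᵢ[ℝ] V) : ℕ :=
  sInf { n | ∃ l : List (V ≃ₗᵢ[ℝ] V),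
    (∀ g ∈ l, ∃ α ∈ D.Pi, g = rRefl α) ∧ l.prod = w ∧ l.length = n }

/-- The Bruhat order on `W` (subword property): `u ≤ w` iff some reduced word for `w`
has a subword which is a word for `u`. -/
def bruhatLE (u w : V ≃ₗᵢ[ℝ] V) : Prop :=
  ∃ l : List (V ≃ₗᵢ[ℝ] V),
    (∀ g ∈ l, ∃ α ∈ D.Pi, g = rRefl α) ∧ l.prod = w ∧ l.length = D.len w ∧
    ∃ l' : List (V ≃ₗᵢ[ℝ] V), l'.Sublist l ∧ l'.prod = u

def Dominant (lam : V) : Prop := ∀ α ∈ D.Rpos, 0 ≤ ⟪lam, α⟫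

def AntiDominant (lam : V) : Prop := ∀ α ∈ D.Rpos, ⟪lam, α⟫ ≤ 0

def DominantI (I : Finset V) (lam : V) : Prop := ∀ α ∈ D.RposI I, 0 ≤ ⟪lam, α⟫

/-- `w = v̄(λ)`, the shortest element of `W` with `w λ₊ = λ` (where `λ₊ = w⁻¹λ` is the
dominant representative of `W·λ`). -/
def IsVbar (lam : V) (w : V ≃ₗᵢ[ℝ] V) : Prop :=
  w ∈ D.Weyl ∧ D.Dominant (w⁻¹ lam) ∧
    ∀ u ∈ D.Weyl, D.Dominant (u⁻¹ lam) → D.len w ≤ D.len u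

/-- `w = v(λ)`, the shortest element of `W` with `w λ = λ₋` antidominant. -/
def IsVmin (lam : V) (w : V ≃ₗᵢ[ℝ] V) : Prop :=
  w ∈ D.Weyl ∧ D.AntiDominant (w lam) ∧
    ∀ u ∈ D.Weyl, D.AntiDominant (u lam) → D.len w ≤ D.len u

/-- `w = v̄_I(λ)`, the shortest element of `W_I` with `w λ_{I,+} = λ`. -/
def IsVbarI (I : Finset V) (lam : V) (w : V ≃ₗᵢ[ℝ] V) : Prop :=
  w ∈ D.WeylP I ∧ D.DominantI I (w⁻¹ lam) ∧
    ∀ u ∈ D.WeylP I, D.DominantI I (u⁻¹ lam) → D.len w ≤ D.len u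

/-- `λ ⪯ μ` iff `μ - λ ∈ Q^+`. -/
def preceq (lam mu : V) : Prop :=
  ∃ c : V → ℕ, mu - lam = ∑ α ∈ D.Pi, (c α : ℝ) • α

/-- The ordering `λ ≤_∅ μ` of Heckman: `λ₊ ≺ μ₊`, or `λ₊ = μ₊` and `v̄(λ) ≤ v̄(μ)` in the
Bruhat order. -/
def leEmpty (lam mu : V) : Prop :=
  ∃ lamP muP : V, lamP ∈ D.Pplus ∧ muP ∈ D.Pplus ∧
    (∃ w ∈ D.Weyl, w lamP = lam) ∧ (∃ w ∈ D.Weyl, w muP = mu) ∧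
    ((D.preceq lamP muP ∧ lamP ≠ muP) ∨
      (lamP = muP ∧ ∃ vl vm : V ≃ₗᵢ[ℝ] V,
        D.IsVbar lam vl ∧ D.IsVbar mu vm ∧ D.bruhatLE vl vm))

def ltEmpty (lam mu : V) : Prop := D.leEmpty lam mu ∧ lam ≠ mu

/-- `≤_I`, the restriction of `≤_∅` to `P_I^+`. -/
def leI (I : Finset V) (lam mu : V) : Prop :=
  lam ∈ D.PplusI I ∧ mu ∈ D.PplusI I ∧ D.leEmpty lam mu

def ltI (I : Finset V) (lam mu : V) : Prop := D.leI I lam mu ∧ lam ≠ mu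

/-- `ρ(k) = ½ Σ_{α ∈ R^+} k_α α`. -/
def rho (k : V → ℝ) : V := (1/2 : ℝ) • ∑ α ∈ D.Rpos, k α • α

end RootData

/-- The action of `w ∈ W` on `ℂ[P] ⊆ ℂ[V]`, `e^λ ↦ e^{wλ}`. -/
def wAct (w : V ≃ₗᵢ[ℝ] V) (f : AddMonoidAlgebra ℂ V) : AddMonoidAlgebra ℂ V :=
  AddMonoidAlgebra.ofCoeff (Finsupp.mapDomain ⇑w f.coeff)

/-- `e^λ ∈ ℂ[V]`. -/
def expw (lam : V) : AddMonoidAlgebra ℂ V := AddMonoidAlgebra.ofCoeff (Finsupp.single lam 1)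

namespace RootData

variable (D : RootData V)

/-- The orbit `W_I · λ`. -/
def orbitI (I : Finset V) (lam : V) : Set V := { x | ∃ w ∈ D.WeylP I, w lam = x }

/-- `m_I(λ) = Σ_{μ ∈ W_I·λ} e^μ`. -/
def mI (I : Finset V) (lam : V) : AddMonoidAlgebra ℂ V :=
  ∑ᶠ mu ∈ D.orbitI I lam, expw mu

/-- `ℂ[P]^H`: the `H`-invariant elements of the group algebra `ℂ[P]` (realized inside
`ℂ[V]` as the elements supported on the weight lattice `P`). -/
def invSet (H : Subgroup (V ≃ₗᵢ[ℝ] V)) : Set (AddMonoidAlgebra ℂ V) :=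
  { f | (∀ x ∈ f.coeff.support, x ∈ D.P) ∧ ∀ w ∈ H, wAct w f = f }

end RootData

/-- The compact torus `A = i𝔞/(2πiQ^∨)`, encoded through an abstract probability space
together with the system of characters `ev λ = e^λ : A → ℂ`, `λ ∈ P`; the characters are
multiplicative in `λ`, unimodular, and orthonormal with respect to the (normalized Haar)
measure `μ`.  This data determines the joint distribution of the characters and hence
all the integrals below agree with those over the actual torus. -/
structure TorusData (D : RootData V) (A : Type*) [MeasurableSpace A]
    (μ : Measure A) where
  ev : V → A → ℂ
  ev_add : ∀ lam ∈ D.P, ∀ mu ∈ D.P, ∀ t, ev (lam + mu) t = ev lam t * ev mu t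
  ev_norm : ∀ lam ∈ D.P, ∀ t, ‖ev lam t‖ = 1
  ev_meas : ∀ lam ∈ D.P, Measurable (ev lam)
  ev_orth : ∀ lam ∈ D.P, ∀ mu ∈ D.P,
    (∫ t, (starRingEnd ℂ) (ev lam t) * ev mu t ∂μ) = if lam = mu then 1 else 0

namespace TorusData

variable {D : RootData V} {A : Type*} [MeasurableSpace A] {μ : Measure A}

/-- Evaluation of a Laurent polynomial `f ∈ ℂ[P]` as a function on the torus. -/
def evalF (T : TorusData D A μ) (f : AddMonoidAlgebra ℂ V) (t : A) : ℂ :=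
  Finsupp.sum f.coeff fun lam c => c * T.ev lam t

/-- The weight function `δ_k = ∏_{α∈R}(e^{α/2} - e^{-α/2})^{k_α}
= ∏_{α∈R^+} |e^α - 1|^{2k_α}` on `A` (the two expressions agree since `k` is
`W`-invariant and `|e^{α/2}-e^{-α/2}|² = |e^α - 1|²` as `|e^{α/2}| = 1`). -/
def deltaK (T : TorusData D A μ) (k : V → ℝ) (t : A) : ℝ :=
  ∏ α ∈ D.Rpos, ‖T.ev α t - 1‖ ^ (2 * k α)

/-- The inner product `(φ,ψ)_k = ∫_A conj(φ(t)) ψ(t) δ_k(t) dt` on `ℂ[P]`. -/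
def ipk (T : TorusData D A μ) (k : V → ℝ) (f g : AddMonoidAlgebra ℂ V) : ℂ :=
  ∫ t, (starRingEnd ℂ) (T.evalF f t) * T.evalF g t * ((T.deltaK k t : ℝ) : ℂ) ∂μ

/-- The defining property of the nonsymmetric Jacobi polynomial `E(λ,k)`:
`E = e^λ + Σ_{μ <_∅ λ} c_μ e^μ` and `(E, e^μ)_k = 0` for all `μ <_∅ λ`. -/
def IsNonsymJacobi (T : TorusData D A μ) (k : V → ℝ) (lam : V)
    (E : AddMonoidAlgebra ℂ V) : Prop :=
  (∃ c : V →₀ ℂ, c lam = 1 ∧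
      (∀ mu ∈ c.support, mu ∈ D.P ∧ (mu = lam ∨ D.ltEmpty mu lam)) ∧
      E = Finsupp.sum c fun mu a => a • expw mu) ∧
  ∀ mu ∈ D.P, D.ltEmpty mu lam → T.ipk k E (expw mu) = 0

/-- The defining property of the Jacobi polynomial `p_I(λ,k)`:
`p ∈ ℂ[P]^{W_I}`, `p = m_I(λ) + Σ_{μ <_I λ} c_μ m_I(μ)`, and `(p, m_I(μ))_k = 0` for
all `μ <_I λ`. -/
def IsJacobiI (T : TorusData D A μ) (I : Finset V) (k : V → ℝ) (lam : V)
    (p : AddMonoidAlgebra ℂ V) : Prop :=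
  p ∈ D.invSet (D.WeylP I) ∧
  (∃ c : V →₀ ℂ, c lam = 1 ∧
      (∀ mu ∈ c.support, mu ∈ D.PplusI I ∧ (mu = lam ∨ D.ltI I mu lam)) ∧
      p = Finsupp.sum c fun mu a => a • D.mI I mu) ∧
  ∀ mu ∈ D.PplusI I, D.ltI I mu lam → T.ipk k p (D.mI I mu) = 0

end TorusData


namespace Aux1

variable {D : RootData V}

/-- Simple word predicate. -/
def SW (D : RootData V) (l : List (V ≃ₗᵢ[ℝ] V)) : Prop :=
  ∀ g ∈ l, ∃ α ∈ D.Pi, g = rRefl α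

/-- A strictly dominant vector. -/
def rhoStar (D : RootData V) : V := ∑ α ∈ D.Pi, D.fw α

lemma inner_self_pos_of_mem {α : V} (h : α ∈ D.R) : 0 < ⟪α, α⟫ :=
  real_inner_self_nonneg.lt_of_ne (Ne.symm (inner_self_ne_zero.2 (D.nonzero α h)))

lemma rRefl_apply {α : V} (h : α ≠ 0) (x : V) :
    rRefl α x = x - (2 * ⟪x, α⟫ / ⟪α, α⟫) • α := by
  rw [rRefl, Submodule.reflection_apply]
  rw [Submodule.starProjection_orthogonal_val, Submodule.starProjection_singleton]
  have hα : ⟪α, α⟫ ≠ 0 := inner_self_ne_zero.2 h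
  rw [real_inner_comm α x, real_inner_self_eq_norm_sq α] at *
  rw [two_smul]
  push_cast
  field_simp
  module

lemma rRefl_inv (α : V) : (rRefl α)⁻¹ = rRefl α := Submodule.reflection_symm

lemma rRefl_self {α : V} (h : α ≠ 0) : rRefl α α = -α := by
  have hα : ⟪α, α⟫ ≠ 0 := inner_self_ne_zero.2 h
  rw [rRefl_apply h]
  field_simp
  module

lemma rRefl_fix {α x : V} (h : α ≠ 0) (hx : ⟪x, α⟫ = 0) : rRefl α x = x := by
  rw [rRefl_apply h, hx]
  simp

lemma rRefl_smul {c : ℝ} (hc : c ≠ 0) {α : V} (hα : α ≠ 0) : rRefl (c • α) = rRefl α := by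
  have hcα : c • α ≠ 0 := smul_ne_zero hc hα
  have hα2 : ⟪α, α⟫ ≠ 0 := inner_self_ne_zero.2 hα
  apply LinearIsometryEquiv.ext
  intro x
  rw [rRefl_apply hα, rRefl_apply hcα]
  rw [real_inner_smul_right, real_inner_smul_left, real_inner_smul_right, smul_smul]
  congr 1
  congr 1
  field_simp

lemma rRefl_conj (g : V ≃ₗᵢ[ℝ] V) {α : V} (h : α ≠ 0) :
    rRefl (g α) = g * rRefl α * g⁻¹ := by
  have hg : g α ≠ 0 := by
    simpa using fun hh => h (by simpa using congrArg g.symm hh)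
  apply LinearIsometryEquiv.ext
  intro x
  have h1 : (g * rRefl α * g⁻¹) x = g (rRefl α (g.symm x)) := rfl
  rw [h1, rRefl_apply h, rRefl_apply hg]
  rw [map_sub, LinearIsometryEquiv.map_smul, LinearIsometryEquiv.apply_symm_apply]
  have h2 : ⟪x, g α⟫ = ⟪g.symm x, α⟫ := by
    conv_lhs => rw [show x = g (g.symm x) by rw [LinearIsometryEquiv.apply_symm_apply]]
    rw [LinearIsometryEquiv.inner_map_map]
  rw [h2, LinearIsometryEquiv.inner_map_map]

lemma fw_inner {α β : V} (hα : α ∈ D.Pi) (hβ : β ∈ D.Pi) :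
    ⟪D.fw α, β⟫ = if α = β then ⟪β, β⟫ / 2 else 0 := by
  have h := D.fw_prop α hα β hβ
  have hβ0 : ⟪β, β⟫ ≠ 0 :=
    inner_self_ne_zero.2 (D.nonzero β (D.pos_subset (D.simple_subset hβ)))
  rw [real_inner_smul_right] at h
  rcases eq_or_ne α β with rfl | hne
  · rw [if_pos rfl] at h; rw [if_pos rfl]
    field_simp at h ⊢; linarith
  · rw [if_neg hne] at h; rw [if_neg hne]
    rcases mul_eq_zero.1 h with h' | h'
    · exact absurd h' (by positivity)
    · exact h'

lemma inner_fw_rep {c : V → ℝ} {x : V} (hx : x = ∑ β ∈ D.Pi, c β • β) {δ : V}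
    (hδ : δ ∈ D.Pi) : ⟪D.fw δ, x⟫ = c δ * (⟪δ, δ⟫ / 2) := by
  rw [hx, inner_sum]
  rw [Finset.sum_eq_single_of_mem δ hδ]
  · rw [real_inner_smul_right, fw_inner hδ hδ, if_pos rfl]
  · intro β hβ hne
    rw [real_inner_smul_right, fw_inner hδ hβ, if_neg (Ne.symm hne), mul_zero]

lemma rhoStar_inner_rep {c : V → ℝ} {x : V} (hx : x = ∑ β ∈ D.Pi, c β • β) :
    ⟪rhoStar D, x⟫ = ∑ δ ∈ D.Pi, c δ * (⟪δ, δ⟫ / 2) := by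
  rw [rhoStar, sum_inner]
  exact Finset.sum_congr rfl fun δ hδ => inner_fw_rep hx hδ

lemma rhoStar_inner_pos {γ : V} (h : γ ∈ D.Rpos) : 0 < ⟪rhoStar D, γ⟫ := by
  obtain ⟨c, hc, hrep⟩ := D.pos_comb γ h
  rw [rhoStar_inner_rep hrep]
  have hnn : ∀ δ ∈ D.Pi, (0:ℝ) ≤ c δ * (⟪δ, δ⟫ / 2) := fun δ hδ => by
    have h1 := inner_self_pos_of_mem (D.pos_subset (D.simple_subset hδ))
    have h2 := hc δ; positivity
  have hex : ∃ δ ∈ D.Pi, (0:ℝ) < c δ * (⟪δ, δ⟫ / 2) := by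
    by_contra hall
    push_neg at hall
    have hzero : ∀ δ ∈ D.Pi, c δ • δ = (0:V) := by
      intro δ hδ
      have h2 := hall δ hδ
      have h3 := inner_self_pos_of_mem (D.pos_subset (D.simple_subset hδ))
      have hc0 : c δ = 0 := by nlinarith [hc δ]
      rw [hc0, zero_smul]
    have : γ = 0 := by rw [hrep, Finset.sum_eq_zero hzero]
    exact D.nonzero γ (D.pos_subset h) this
  exact Finset.sum_pos' hnn hex

lemma neg_mem_R {α : V} (h : α ∈ D.R) : -α ∈ D.R := by
  have := D.reflect_mem α h α h
  have hα : ⟪α, α⟫ ≠ 0 := (inner_self_pos_of_mem h).ne'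
  have h2 : α - (2 * ⟪α, α⟫ / ⟪α, α⟫) • α = -α := by
    field_simp; module
  rwa [h2] at this

lemma pos_iff {β : V} (h : β ∈ D.R) : β ∈ D.Rpos ↔ 0 < ⟪rhoStar D, β⟫ := by
  constructor
  · exact rhoStar_inner_pos
  · intro hpos
    by_contra hn
    have : -β ∈ D.Rpos := by
      by_contra hn2
      exact hn ((D.pos_or_neg β h).2 hn2)
    have := rhoStar_inner_pos this
    rw [inner_neg_right] at this
    linarith

lemma not_pos_of_neg_pos {β : V} (h : β ∈ D.R) (hp : β ∈ D.Rpos) : -β ∉ D.Rpos :=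
  (D.pos_or_neg β h).1 hp

/-- Every Weyl group element maps `R` into `R`. -/
lemma weyl_maps_R : ∀ w ∈ D.Weyl, (∀ β ∈ D.R, w β ∈ D.R) ∧ (∀ β ∈ D.R, w⁻¹ β ∈ D.R) := by
  intro w hw
  refine Subgroup.closure_induction
    (p := fun w _ => (∀ β ∈ D.R, w β ∈ D.R) ∧ (∀ β ∈ D.R, w⁻¹ β ∈ D.R)) ?_ ?_ ?_ ?_ hw
  · rintro x ⟨α, hα, rfl⟩
    have hαR : α ∈ D.R := D.pos_subset (D.simple_subset hα)
    have h0 : α ≠ 0 := D.nonzero α hαR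
    have key : ∀ β ∈ D.R, rRefl α β ∈ D.R := by
      intro β hβ
      rw [rRefl_apply h0]
      exact D.reflect_mem α hαR β hβ
    exact ⟨key, by rw [rRefl_inv]; exact key⟩
  · constructor <;> intro β hβ <;> simpa using hβ
  · rintro x y _ _ ⟨hx1, hx2⟩ ⟨hy1, hy2⟩
    constructor
    · intro β hβ
      have : (x * y) β = x (y β) := rfl
      rw [this]; exact hx1 _ (hy1 β hβ)
    · intro β hβ
      have : (x * y)⁻¹ β = y⁻¹ (x⁻¹ β) := rfl
      rw [this]; exact hy2 _ (hx2 β hβ)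
  · rintro x _ ⟨hx1, hx2⟩
    exact ⟨hx2, by simpa using hx1⟩

lemma weyl_maps_R' {w : V ≃ₗᵢ[ℝ] V} (hw : w ∈ D.Weyl) {β : V} (hβ : β ∈ D.R) :
    w β ∈ D.R := (weyl_maps_R w hw).1 β hβ

lemma word_of_mem {w : V ≃ₗᵢ[ℝ] V} (hw : w ∈ D.Weyl) :
    ∃ l, SW D l ∧ l.prod = w := by
  refine Subgroup.closure_induction (p := fun w _ => ∃ l, SW D l ∧ l.prod = w) ?_ ?_ ?_ ?_ hw
  · rintro x hx
    exact ⟨[x], by rintro g hg; simp at hg; subst hg; exact hx, by simp⟩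
  · exact ⟨[], by rintro g hg; simp at hg, by simp⟩
  · rintro x y _ _ ⟨l1, h1, rfl⟩ ⟨l2, h2, rfl⟩
    refine ⟨l1 ++ l2, ?_, by rw [List.prod_append]⟩
    intro g hg
    rcases List.mem_append.1 hg with h | h
    · exact h1 g h
    · exact h2 g h
  · rintro x _ ⟨l, hl, rfl⟩
    refine ⟨(l.map (·⁻¹)).reverse, ?_, (List.prod_inv_reverse l).symm⟩
    intro g hg
    rw [List.mem_reverse, List.mem_map] at hg
    obtain ⟨h, hh, rfl⟩ := hg
    obtain ⟨α, hα, rfl⟩ := hl h hh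
    exact ⟨α, hα, by rw [rRefl_inv]⟩

lemma sw_prod_mem {l : List (V ≃ₗᵢ[ℝ] V)} (hl : SW D l) : l.prod ∈ D.Weyl := by
  refine Subgroup.list_prod_mem _ fun x hx => ?_
  obtain ⟨α, hα, rfl⟩ := hl x hx
  exact Subgroup.subset_closure ⟨α, hα, rfl⟩

end Aux1

namespace Aux1

variable {D : RootData V}

lemma iso_mul_apply (f g : V ≃ₗᵢ[ℝ] V) (x : V) : (f * g) x = f (g x) := rfl

lemma iso_one_apply (x : V) : (1 : V ≃ₗᵢ[ℝ] V) x = x := rfl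

lemma iso_apply_inv_apply (g : V ≃ₗᵢ[ℝ] V) (x : V) : g (g⁻¹ x) = x :=
  g.apply_symm_apply x

lemma iso_inv_apply_apply (g : V ≃ₗᵢ[ℝ] V) (x : V) : g⁻¹ (g x) = x :=
  g.symm_apply_apply x

lemma inner_conj (g : V ≃ₗᵢ[ℝ] V) (x y : V) : ⟪g x, y⟫ = ⟪x, g⁻¹ y⟫ := by
  conv_lhs => rw [show y = g (g⁻¹ y) from (iso_apply_inv_apply g y).symm]
  rw [LinearIsometryEquiv.inner_map_map]

lemma rRefl_rRefl {α : V} (x : V) : rRefl α (rRefl α x) = x := by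
  have : rRefl α (rRefl α x) = ((rRefl α)⁻¹ * rRefl α) x := by
    rw [rRefl_inv]; rfl
  rw [this, inv_mul_cancel, iso_one_apply]

lemma simple_mem_R {α : V} (h : α ∈ D.Pi) : α ∈ D.R :=
  D.pos_subset (D.simple_subset h)

lemma simple_ne_zero {α : V} (h : α ∈ D.Pi) : α ≠ 0 := D.nonzero α (simple_mem_R h)

lemma neg_pos_of_not_pos {β : V} (hβ : β ∈ D.R) (h : β ∉ D.Rpos) : -β ∈ D.Rpos := by
  by_contra h2
  exact h ((D.pos_or_neg β hβ).2 h2)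

/-- Key lemma: a positive root made negative by a simple reflection is a multiple of
the simple root. -/
lemma KL {α γ : V} (hα : α ∈ D.Pi) (hγ : γ ∈ D.Rpos) (hneg : rRefl α γ ∉ D.Rpos) :
    ∃ c : ℝ, 0 < c ∧ γ = c • α := by
  have hαR : α ∈ D.R := simple_mem_R hα
  have hα0 : α ≠ 0 := simple_ne_zero hα
  have hγR : γ ∈ D.R := D.pos_subset hγ
  have hsR : rRefl α γ ∈ D.R := by
    rw [rRefl_apply hα0]; exact D.reflect_mem α hαR γ hγR
  have hnegpos : -(rRefl α γ) ∈ D.Rpos := neg_pos_of_not_pos hsR hneg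
  obtain ⟨c, hc, hrep⟩ := D.pos_comb γ hγ
  obtain ⟨d, hd, hdrep⟩ := D.pos_comb (-(rRefl α γ)) hnegpos
  have hczero : ∀ δ ∈ D.Pi, δ ≠ α → c δ = 0 := by
    intro δ hδ hne
    have hδpos := inner_self_pos_of_mem (simple_mem_R hδ)
    have h1 : ⟪D.fw δ, rRefl α γ⟫ = c δ * (⟪δ, δ⟫ / 2) := by
      rw [rRefl_apply hα0, inner_sub_right, real_inner_smul_right,
        fw_inner hδ hα, if_neg hne, mul_zero, sub_zero, inner_fw_rep hrep hδ]
    have h2 : ⟪D.fw δ, -(rRefl α γ)⟫ = d δ * (⟪δ, δ⟫ / 2) := inner_fw_rep hdrep hδ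
    rw [inner_neg_right, h1] at h2
    have hcnn : 0 ≤ c δ := hc δ
    have hdnn : 0 ≤ d δ := hd δ
    nlinarith
  have hγα : γ = c α • α := by
    rw [hrep, Finset.sum_eq_single_of_mem α hα]
    intro β hβ hne
    rw [hczero β hβ hne, zero_smul]
  have hcα : 0 < c α := by
    rcases (hc α).lt_or_eq with h | h
    · exact h
    · exfalso
      apply D.nonzero γ hγR
      rw [hγα, ← h, zero_smul]
  exact ⟨c α, hcα, hγα⟩

/-- Strong exchange for simple words. -/
lemma exchange : ∀ l : List (V ≃ₗᵢ[ℝ] V), SW D l → ∀ γ, γ ∈ D.Rpos →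
    l.prod γ ∉ D.Rpos →
    ∃ l', SW D l' ∧ l'.length + 1 = l.length ∧ l.prod = l'.prod * rRefl γ := by
  intro l
  induction l with
  | nil =>
    intro _ γ hγ hn
    exact absurd (by simpa [iso_one_apply] using hγ) hn
  | cons g t IH =>
    intro hsw γ hγ hn
    obtain ⟨α, hα, rfl⟩ := hsw g List.mem_cons_self
    have hswt : SW D t := fun x hx => hsw x (List.mem_cons_of_mem _ hx)
    have hγ0 : γ ≠ 0 := D.nonzero γ (D.pos_subset hγ)
    have hα0 : α ≠ 0 := simple_ne_zero hα
    rw [List.prod_cons, iso_mul_apply] at hn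
    by_cases hp : t.prod γ ∈ D.Rpos
    · obtain ⟨c, hc, hcy⟩ := KL hα hp hn
      refine ⟨t, hswt, by simp, ?_⟩
      have h1 : rRefl (t.prod γ) = rRefl α := by rw [hcy]; exact rRefl_smul hc.ne' hα0
      have h2 : rRefl (t.prod γ) = t.prod * rRefl γ * (t.prod)⁻¹ := rRefl_conj t.prod hγ0
      rw [List.prod_cons, ← h1, h2]
      group
    · obtain ⟨t', hswt', hlen, hprod⟩ := IH hswt γ hγ hp
      refine ⟨rRefl α :: t', ?_, by simp [← hlen], ?_⟩
      · intro x hx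
        rcases List.mem_cons.1 hx with h | h
        · exact ⟨α, hα, h⟩
        · exact hswt' x h
      · rw [List.prod_cons, List.prod_cons, hprod, mul_assoc]

/-- A product of simple reflections mapping all positive roots to positive roots is 1. -/
lemma no_inversion_one : ∀ n (l : List (V ≃ₗᵢ[ℝ] V)), l.length = n → SW D l →
    (∀ γ ∈ D.Rpos, l.prod γ ∈ D.Rpos) → l.prod = 1 := by
  intro n
  induction n using Nat.strong_induction_on with
  | _ n IH =>
    intro l hlen hsw hpos
    match l with
    | [] => simp
    | g :: t =>
      obtain ⟨α, hα, rfl⟩ := hsw g List.mem_cons_self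
      have hswt : SW D t := fun x hx => hsw x (List.mem_cons_of_mem _ hx)
      have hpW : t.prod ∈ D.Weyl := sw_prod_mem hswt
      have hαpos : α ∈ D.Rpos := D.simple_subset hα
      have hαR : α ∈ D.R := D.pos_subset hαpos
      have hα0 : α ≠ 0 := D.nonzero α hαR
      by_cases hc : (t.prod)⁻¹ α ∈ D.Rpos
      · exfalso
        have h1 := hpos _ hc
        rw [List.prod_cons, iso_mul_apply, iso_apply_inv_apply, rRefl_self hα0] at h1
        exact not_pos_of_neg_pos hαR hαpos h1
      · have hinvR : (t.prod)⁻¹ α ∈ D.R := (weyl_maps_R t.prod hpW).2 α hαR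
        have hγpos : -((t.prod)⁻¹ α) ∈ D.Rpos := neg_pos_of_not_pos hinvR hc
        have hγ0 : (t.prod)⁻¹ α ≠ 0 := D.nonzero _ hinvR
        have hpγ : t.prod (-((t.prod)⁻¹ α)) ∉ D.Rpos := by
          rw [map_neg, iso_apply_inv_apply]
          exact not_pos_of_neg_pos hαR hαpos
        obtain ⟨t', hswt', hlen', hprod⟩ := exchange t hswt _ hγpos hpγ
        have h2 : rRefl (-((t.prod)⁻¹ α)) = rRefl ((t.prod)⁻¹ α) := by
          rw [show -((t.prod)⁻¹ α) = (-1 : ℝ) • ((t.prod)⁻¹ α) by simp]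
          exact rRefl_smul (by norm_num) hγ0
        have h3 : rRefl ((t.prod)⁻¹ α) = (t.prod)⁻¹ * rRefl α * t.prod := by
          rw [rRefl_conj ((t.prod)⁻¹) hα0, inv_inv]
        rw [h2, h3] at hprod
        have key : (rRefl α :: t).prod = t'.prod := by
          rw [List.prod_cons]
          have h4 : t'.prod = t.prod * ((t.prod)⁻¹ * rRefl α * t.prod)⁻¹ :=
            eq_mul_inv_of_mul_eq hprod.symm
          rw [h4, mul_inv_rev, mul_inv_rev, rRefl_inv, inv_inv]
          group
        have hltn : t'.length < n := by
          have : t.length + 1 = n := by simpa using hlen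
          omega
        rw [key]
        exact IH t'.length hltn t' rfl hswt' (fun γ hγ => key ▸ hpos γ hγ)

lemma no_inversion_w {w : V ≃ₗᵢ[ℝ] V} (hw : w ∈ D.Weyl)
    (hpos : ∀ γ ∈ D.Rpos, w γ ∈ D.Rpos) : w = 1 := by
  obtain ⟨l, hl, rfl⟩ := word_of_mem hw
  exact no_inversion_one l.length l rfl hl hpos

/-- Nonnegative combination lemma. -/
lemma combo_pos {g : V ≃ₗᵢ[ℝ] V} (hg : g ∈ D.Weyl) {γ : V} (hγ : γ ∈ D.Rpos)
    {c : V → ℝ} (hc0 : ∀ β, 0 ≤ c β) (hrep : γ = ∑ β ∈ D.Pi, c β • β)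
    (h : ∀ δ ∈ D.Pi, 0 < c δ → g δ ∈ D.Rpos) : g γ ∈ D.Rpos := by
  have hgR : g γ ∈ D.R := weyl_maps_R' hg (D.pos_subset hγ)
  rw [pos_iff hgR]
  have himg : g γ = ∑ β ∈ D.Pi, c β • g β := by
    rw [hrep, map_sum]
    exact Finset.sum_congr rfl fun β _ => g.map_smul _ _
  rw [himg, inner_sum]
  have hnn : ∀ δ ∈ D.Pi, (0:ℝ) ≤ ⟪rhoStar D, c δ • g δ⟫ := by
    intro δ hδ
    rw [real_inner_smul_right]
    rcases (hc0 δ).lt_or_eq with h1 | h1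
    · have := rhoStar_inner_pos (h δ hδ h1)
      positivity
    · rw [← h1, zero_mul]
  have hex : ∃ δ ∈ D.Pi, (0:ℝ) < ⟪rhoStar D, c δ • g δ⟫ := by
    by_contra hall
    push_neg at hall
    have hzero : ∀ δ ∈ D.Pi, c δ • δ = (0:V) := by
      intro δ hδ
      rcases (hc0 δ).lt_or_eq with h1 | h1
      · exfalso
        have h2 := rhoStar_inner_pos (h δ hδ h1)
        have h3 := hall δ hδ
        rw [real_inner_smul_right] at h3
        nlinarith
      · rw [← h1, zero_smul]
    exact absurd (by rw [hrep, Finset.sum_eq_zero hzero] : γ = 0)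
      (D.nonzero γ (D.pos_subset hγ))
  exact Finset.sum_pos' hnn hex

lemma simple_pos_all {w : V ≃ₗᵢ[ℝ] V} (hw : w ∈ D.Weyl)
    (h : ∀ α ∈ D.Pi, w α ∈ D.Rpos) : ∀ γ ∈ D.Rpos, w γ ∈ D.Rpos := by
  intro γ hγ
  obtain ⟨c, hc, hrep⟩ := D.pos_comb γ hγ
  exact combo_pos hw hγ hc hrep (fun δ hδ _ => h δ hδ)

/-- Inversion set. -/
def InvS (D : RootData V) (w : V ≃ₗᵢ[ℝ] V) : Finset V :=
  D.Rpos.filter (fun γ => w γ ∉ D.Rpos)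

lemma inv_card_lt {w : V ≃ₗᵢ[ℝ] V} (hw : w ∈ D.Weyl) {α : V} (hα : α ∈ D.Pi)
    (hneg : w α ∉ D.Rpos) : (InvS D (w * rRefl α)).card < (InvS D w).card := by
  have hαpos : α ∈ D.Rpos := D.simple_subset hα
  have hαR : α ∈ D.R := D.pos_subset hαpos
  have hα0 : α ≠ 0 := D.nonzero α hαR
  have hαmem : α ∈ InvS D w := Finset.mem_filter.2 ⟨hαpos, hneg⟩
  have hwαR : w α ∈ D.R := weyl_maps_R' hw hαR
  have hmaps : ∀ γ ∈ InvS D (w * rRefl α), rRefl α γ ∈ (InvS D w).erase α := by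
    intro γ hγ
    obtain ⟨hγpos, hγneg⟩ := Finset.mem_filter.1 hγ
    rw [iso_mul_apply] at hγneg
    have hsγpos : rRefl α γ ∈ D.Rpos := by
      by_contra hcon
      obtain ⟨c, hc, rfl⟩ := KL hα hγpos hcon
      apply hγneg
      have h1 : rRefl α (c • α) = -(c • α) := by
        rw [LinearIsometryEquiv.map_smul, rRefl_self hα0, smul_neg]
      rw [h1, map_neg, LinearIsometryEquiv.map_smul]
      have h2 : -(c • w α) = c • (-(w α)) := by module
      rw [h2]
      have hnwα : -(w α) ∈ D.Rpos := neg_pos_of_not_pos hwαR hneg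
      have hR : c • (-(w α)) ∈ D.R := by
        rw [← h2, ← LinearIsometryEquiv.map_smul, ← map_neg, ← h1]
        exact weyl_maps_R' hw (by
          rw [h1]
          have : -(c • α) ∈ D.R := by
            rw [show -(c•α) = rRefl α (c•α) from h1.symm]
            rw [rRefl_apply hα0]
            exact D.reflect_mem α hαR (c • α) (D.pos_subset hγpos)
          exact this)
      rw [pos_iff hR, real_inner_smul_right]
      have := rhoStar_inner_pos hnwα
      positivity
    refine Finset.mem_erase.2 ⟨?_, Finset.mem_filter.2 ⟨hsγpos, hγneg⟩⟩
    intro hcon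
    have : γ = -α := by
      have := congrArg (rRefl α) hcon
      rwa [rRefl_rRefl, rRefl_self hα0] at this
    rw [this] at hγpos
    exact not_pos_of_neg_pos hαR hαpos hγpos
  have hinj : Set.InjOn (rRefl α) (InvS D (w * rRefl α) : Set V) :=
    fun x _ y _ h => (rRefl α).injective h
  have h1 : (InvS D (w * rRefl α)).card ≤ ((InvS D w).erase α).card :=
    Finset.card_le_card_of_injOn _ hmaps hinj
  have h2 : ((InvS D w).erase α).card < (InvS D w).card :=
    Finset.card_erase_lt_of_mem hαmem
  omega

lemma dominant_unique_aux : ∀ n (w : V ≃ₗᵢ[ℝ] V), w ∈ D.Weyl → (InvS D w).card = n →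
    ∀ lam, D.Dominant lam → D.Dominant (w lam) → w lam = lam := by
  intro n
  induction n using Nat.strong_induction_on with
  | _ n IH =>
    intro w hw hcard lam hdom hdomw
    by_cases hsimple : ∀ α ∈ D.Pi, w α ∈ D.Rpos
    · have hall := simple_pos_all hw hsimple
      have : w = 1 := no_inversion_w hw hall
      rw [this, iso_one_apply]
    · push_neg at hsimple
      obtain ⟨α, hα, hneg⟩ := hsimple
      have hαpos : α ∈ D.Rpos := D.simple_subset hα
      have hαR : α ∈ D.R := D.pos_subset hαpos
      have hα0 : α ≠ 0 := D.nonzero α hαR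
      have h1 : 0 ≤ ⟪lam, α⟫ := hdom α hαpos
      have hwαR : w α ∈ D.R := weyl_maps_R' hw hαR
      have h2 : ⟪lam, α⟫ ≤ 0 := by
        have ha : ⟪lam, α⟫ = ⟪w lam, w α⟫ := (LinearIsometryEquiv.inner_map_map w lam α).symm
        have hb : -(w α) ∈ D.Rpos := neg_pos_of_not_pos hwαR hneg
        have hcd := hdomw _ hb
        rw [inner_neg_right] at hcd
        linarith
      have h0 : ⟪lam, α⟫ = 0 := le_antisymm h2 h1
      have hfix : rRefl α lam = lam := rRefl_fix hα0 h0
      have heq : (w * rRefl α) lam = w lam := by rw [iso_mul_apply, hfix]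
      have hmem : w * rRefl α ∈ D.Weyl :=
        mul_mem hw (Subgroup.subset_closure ⟨α, hα, rfl⟩)
      have hlt : (InvS D (w * rRefl α)).card < n := hcard ▸ inv_card_lt hw hα hneg
      have := IH _ hlt (w * rRefl α) hmem rfl lam hdom (by rw [heq]; exact hdomw)
      rw [← heq, this]

lemma dominant_unique {lam : V} (hdom : D.Dominant lam) {w : V ≃ₗᵢ[ℝ] V}
    (hw : w ∈ D.Weyl) (hdomw : D.Dominant (w lam)) : w lam = lam :=
  dominant_unique_aux _ w hw rfl lam hdom hdomw

end Aux1

namespace Aux1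

variable {D : RootData V}

lemma fw_inner_nonneg {β : V} (hβ : β ∈ D.Pi) {γ : V} (hγ : γ ∈ D.Rpos) :
    0 ≤ ⟪D.fw β, γ⟫ := by
  obtain ⟨c, hc, hrep⟩ := D.pos_comb γ hγ
  rw [inner_fw_rep hrep hβ]
  have := inner_self_pos_of_mem (simple_mem_R hβ)
  have := hc β
  positivity

lemma steinberg_inner {v : V ≃ₗᵢ[ℝ] V} {α : V} (hα : α ∈ D.Pi) :
    ⟪D.steinberg v, α⟫ = if v⁻¹ α ∉ D.Rpos then ⟪α, α⟫ / 2 else 0 := by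
  rw [RootData.steinberg, sum_inner]
  have h1 : ∀ β ∈ D.Pi.filter (fun β => v⁻¹ β ∉ D.Rpos),
      ⟪D.fw β, α⟫ = if β = α then ⟪α, α⟫ / 2 else 0 := by
    intro β hβ
    exact fw_inner (Finset.mem_filter.1 hβ).1 hα
  rw [Finset.sum_congr rfl h1, Finset.sum_ite_eq' _ α (fun _ => ⟪α, α⟫ / 2)]
  by_cases h : v⁻¹ α ∉ D.Rpos
  · rw [if_pos (Finset.mem_filter.2 ⟨hα, h⟩), if_pos h]
  · rw [if_neg (fun hc : α ∈ _ => h (Finset.mem_filter.1 hc).2), if_neg h]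

lemma steinberg_dominant (v : V ≃ₗᵢ[ℝ] V) : D.Dominant (D.steinberg v) := by
  intro γ hγ
  rw [RootData.steinberg, sum_inner]
  exact Finset.sum_nonneg fun β hβ =>
    fw_inner_nonneg (Finset.mem_filter.1 hβ).1 hγ

/-- If `⟪λ_v + σ, γ⟫ = 0` for a positive root `γ` (with `σ` dominant),
then `v⁻¹ γ` is positive. -/
lemma steinberg_zero_pos {v : V ≃ₗᵢ[ℝ] V} (hv : v ∈ D.Weyl) {σ : V}
    (hσ : D.Dominant σ) {γ : V} (hγ : γ ∈ D.Rpos)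
    (h0 : ⟪D.steinberg v + σ, γ⟫ = 0) : v⁻¹ γ ∈ D.Rpos := by
  have hdom : D.Dominant (D.steinberg v + σ) := by
    intro β hβ
    rw [inner_add_left]
    exact add_nonneg (steinberg_dominant v β hβ) (hσ β hβ)
  -- simple root case
  have hsimp : ∀ α ∈ D.Pi, ⟪D.steinberg v + σ, α⟫ = 0 → v⁻¹ α ∈ D.Rpos := by
    intro α hα h0'
    have hαpos := D.simple_subset hα
    have h1 : 0 ≤ ⟪D.steinberg v, α⟫ := steinberg_dominant v α hαpos
    have h2 : 0 ≤ ⟪σ, α⟫ := hσ α hαpos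
    rw [inner_add_left] at h0'
    have h3 : ⟪D.steinberg v, α⟫ = 0 := by linarith
    by_contra hcon
    rw [steinberg_inner hα, if_pos hcon] at h3
    have := inner_self_pos_of_mem (simple_mem_R hα)
    linarith
  obtain ⟨c, hc, hrep⟩ := D.pos_comb γ hγ
  refine combo_pos (inv_mem hv) hγ hc hrep ?_
  intro δ hδ hcδ
  apply hsimp δ hδ
  have hterms : ∀ β ∈ D.Pi, (0:ℝ) ≤ c β * ⟪D.steinberg v + σ, β⟫ := by
    intro β hβ
    exact mul_nonneg (hc β) (hdom β (D.simple_subset hβ))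
  have hsum : ∑ β ∈ D.Pi, c β * ⟪D.steinberg v + σ, β⟫ = 0 := by
    rw [← h0, hrep, inner_sum]
    exact Finset.sum_congr rfl fun β _ => by rw [real_inner_smul_right]
  have := (Finset.sum_eq_zero_iff_of_nonneg hterms).1 hsum δ hδ
  rcases mul_eq_zero.1 this with h | h
  · exact absurd h hcδ.ne'
  · exact h

/-- Negation gives a bijection between the positive and nonpositive roots
orthogonal to a fixed vector. -/
lemma half_card (x : V) :
    (D.R.filter (fun β => ⟪x, β⟫ = 0 ∧ β ∈ D.Rpos)).card =
    (D.R.filter (fun β => ⟪x, β⟫ = 0 ∧ β ∉ D.Rpos)).card := by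
  refine Finset.card_bij' (fun β _ => -β) (fun β _ => -β) ?_ ?_ ?_ ?_
  · intro β hβ
    obtain ⟨hβR, h0, hβpos⟩ : β ∈ D.R ∧ ⟪x, β⟫ = 0 ∧ β ∈ D.Rpos := by
      have := Finset.mem_filter.1 hβ; exact ⟨this.1, this.2.1, this.2.2⟩
    refine Finset.mem_filter.2 ⟨neg_mem_R hβR, by rw [inner_neg_right, h0, neg_zero], ?_⟩
    exact not_pos_of_neg_pos hβR hβpos
  · intro β hβ
    obtain ⟨hβR, h0, hβpos⟩ : β ∈ D.R ∧ ⟪x, β⟫ = 0 ∧ β ∉ D.Rpos := by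
      have := Finset.mem_filter.1 hβ; exact ⟨this.1, this.2.1, this.2.2⟩
    refine Finset.mem_filter.2 ⟨neg_mem_R hβR, by rw [inner_neg_right, h0, neg_zero], ?_⟩
    exact neg_pos_of_not_pos hβR hβpos
  · intro β _; simp
  · intro β _; simp

end Aux1

open Aux1

/-- The subsets `v⁻¹(λ_v + P^+)` of the weight lattice `P`, as `v`
ranges over `W`, are pairwise disjoint: if `v⁻¹(λ_v + σ) = u⁻¹(λ_u + τ)` with
`u, v ∈ W` and `σ, τ ∈ P^+`, then `u = v` and `σ = τ`. -/
theorem statement_1 (D : RootData V) :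
    ∀ u ∈ D.Weyl, ∀ v ∈ D.Weyl, ∀ σ ∈ D.Pplus, ∀ τ ∈ D.Pplus,
      v⁻¹ (D.steinberg v + σ) = u⁻¹ (D.steinberg u + τ) → u = v ∧ σ = τ := by
  intro u hu v hv σ hσ τ hτ heq
  have hσdom : D.Dominant σ := fun γ hγ => hσ.2 γ hγ
  have hτdom : D.Dominant τ := fun γ hγ => hτ.2 γ hγ
  set lamv := D.steinberg v + σ with hlamv
  set lamu := D.steinberg u + τ with hlamu
  set mu := v⁻¹ lamv with hmu
  have hmueq : mu = u⁻¹ lamu := heq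
  have hvmu : v mu = lamv := iso_apply_inv_apply v lamv
  have humu : u mu = lamu := by rw [hmueq]; exact iso_apply_inv_apply u lamu
  have hdv : D.Dominant lamv := by
    intro γ hγ
    rw [hlamv, inner_add_left]
    exact add_nonneg (steinberg_dominant v γ hγ) (hσdom γ hγ)
  have hdu : D.Dominant lamu := by
    intro γ hγ
    rw [hlamu, inner_add_left]
    exact add_nonneg (steinberg_dominant u γ hγ) (hτdom γ hγ)
  have hwW : u * v⁻¹ ∈ D.Weyl := mul_mem hu (inv_mem hv)
  have hwl : (u * v⁻¹) lamv = lamu := by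
    rw [iso_mul_apply, ← hmu, humu]
  have hfix : lamu = lamv := by
    rw [← hwl]
    exact dominant_unique hdv hwW (by rw [hwl]; exact hdu)
  -- the two orthogonal-positive-root finsets
  set Plam : Finset V := D.Rpos.filter (fun γ => ⟪lamv, γ⟫ = 0) with hPlam
  set Pmu : Finset V := D.Rpos.filter (fun β => ⟪mu, β⟫ = 0) with hPmu
  have hvmem : ∀ γ ∈ Plam, v⁻¹ γ ∈ Pmu := by
    intro γ hγ
    obtain ⟨hγpos, hγ0⟩ := Finset.mem_filter.1 hγ
    refine Finset.mem_filter.2 ⟨steinberg_zero_pos hv hσdom hγpos (by rw [← hlamv]; exact hγ0), ?_⟩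
    rw [hmu, ← inner_conj, hvmu, hγ0]
  have humem : ∀ γ ∈ Plam, u⁻¹ γ ∈ Pmu := by
    intro γ hγ
    obtain ⟨hγpos, hγ0⟩ := Finset.mem_filter.1 hγ
    have hγ0' : ⟪D.steinberg u + τ, γ⟫ = 0 := by rw [← hlamu, hfix]; exact hγ0
    refine Finset.mem_filter.2 ⟨steinberg_zero_pos hu hτdom hγpos hγ0', ?_⟩
    rw [← inner_conj u mu γ, humu, hfix]
    exact hγ0
  -- cardinalities agree
  have hcard : Plam.card = Pmu.card := by
    rw [hPlam, hPmu]
    have hA : ∀ x : V, (D.Rpos.filter (fun γ => ⟪x, γ⟫ = 0)).card =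
        (D.R.filter (fun β => ⟪x, β⟫ = 0 ∧ β ∈ D.Rpos)).card := by
      intro x
      congr 1
      ext β
      simp only [Finset.mem_filter]
      constructor
      · rintro ⟨h1, h2⟩; exact ⟨D.pos_subset h1, h2, h1⟩
      · rintro ⟨_, h2, h3⟩; exact ⟨h3, h2⟩
    have hfull : ∀ x : V, (D.R.filter (fun β => ⟪x, β⟫ = 0)).card =
        2 * (D.R.filter (fun β => ⟪x, β⟫ = 0 ∧ β ∈ D.Rpos)).card := by
      intro x
      have hsplit : (D.R.filter (fun β => ⟪x, β⟫ = 0)) =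
          (D.R.filter (fun β => ⟪x, β⟫ = 0 ∧ β ∈ D.Rpos)) ∪
          (D.R.filter (fun β => ⟪x, β⟫ = 0 ∧ β ∉ D.Rpos)) := by
        ext β
        simp only [Finset.mem_filter, Finset.mem_union]
        tauto
      have hdisj : Disjoint (D.R.filter (fun β => ⟪x, β⟫ = 0 ∧ β ∈ D.Rpos))
          (D.R.filter (fun β => ⟪x, β⟫ = 0 ∧ β ∉ D.Rpos)) := by
        rw [Finset.disjoint_left]
        intro β h1 h2
        exact (Finset.mem_filter.1 h2).2.2 (Finset.mem_filter.1 h1).2.2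
      rw [hsplit, Finset.card_union_of_disjoint hdisj, ← half_card x]
      ring
    have hRcard : (D.R.filter (fun β => ⟪lamv, β⟫ = 0)).card =
        (D.R.filter (fun β => ⟪mu, β⟫ = 0)).card := by
      refine Finset.card_bij' (fun β _ => v⁻¹ β) (fun β _ => v β) ?_ ?_ ?_ ?_
      · intro β hβ
        obtain ⟨h1, h2⟩ := Finset.mem_filter.1 hβ
        refine Finset.mem_filter.2 ⟨(weyl_maps_R v hv).2 β h1, ?_⟩
        rw [hmu, ← inner_conj, hvmu, h2]
      · intro β hβ
        obtain ⟨h1, h2⟩ := Finset.mem_filter.1 hβ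
        refine Finset.mem_filter.2 ⟨(weyl_maps_R v hv).1 β h1, ?_⟩
        rw [← hvmu, LinearIsometryEquiv.inner_map_map, h2]
      · intro β _; exact iso_apply_inv_apply v β
      · intro β _; exact iso_inv_apply_apply v β
    have := hA lamv
    have := hA mu
    have := hfull lamv
    have := hfull mu
    omega
  -- v⁻¹ maps Plam onto Pmu
  have himg : Plam.image (fun γ => v⁻¹ γ) = Pmu := by
    apply Finset.eq_of_subset_of_card_le
    · intro x hx
      obtain ⟨γ, hγ, rfl⟩ := Finset.mem_image.1 hx
      exact hvmem γ hγ
    · rw [Finset.card_image_of_injective _ (v⁻¹ : V ≃ₗᵢ[ℝ] V).injective, hcard]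
  -- v * u⁻¹ has no inversions
  have hfinal : ∀ γ ∈ D.Rpos, (v * u⁻¹) γ ∈ D.Rpos := by
    intro γ hγ
    rcases (hdv γ hγ).eq_or_lt with h0 | hpos
    · have hγP : γ ∈ Plam := Finset.mem_filter.2 ⟨hγ, h0.symm⟩
      have h1 : u⁻¹ γ ∈ Pmu := humem γ hγP
      rw [← himg] at h1
      obtain ⟨γ', hγ', hEq⟩ := Finset.mem_image.1 h1
      have : (v * u⁻¹) γ = γ' := by
        rw [iso_mul_apply, ← hEq, iso_apply_inv_apply]
      rw [this]
      exact (Finset.mem_filter.1 hγ').1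
    · have hβR : (v * u⁻¹) γ ∈ D.R :=
        weyl_maps_R' (mul_mem hv (inv_mem hu)) (D.pos_subset hγ)
      have hval : ⟪lamv, (v * u⁻¹) γ⟫ = ⟪lamv, γ⟫ := by
        calc ⟪lamv, (v * u⁻¹) γ⟫ = ⟪v mu, v (u⁻¹ γ)⟫ := by rw [hvmu, iso_mul_apply]
        _ = ⟪mu, u⁻¹ γ⟫ := LinearIsometryEquiv.inner_map_map v mu (u⁻¹ γ)
        _ = ⟪u⁻¹ lamu, u⁻¹ γ⟫ := by rw [← hmueq]
        _ = ⟪lamu, γ⟫ := LinearIsometryEquiv.inner_map_map u⁻¹ lamu γ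
        _ = ⟪lamv, γ⟫ := by rw [hfix]
      by_contra hcon
      have hneg : -((v * u⁻¹) γ) ∈ D.Rpos := neg_pos_of_not_pos hβR hcon
      have := hdv _ hneg
      rw [inner_neg_right] at this
      rw [hval] at this
      linarith
  have huv : v * u⁻¹ = 1 := no_inversion_w (mul_mem hv (inv_mem hu)) hfinal
  have huveq : u = v := by
    have : v = u := by
      rw [← mul_one v, ← mul_inv_cancel u⁻¹, ← mul_assoc, huv, inv_inv, one_mul]
    exact this.symm
  refine ⟨huveq, ?_⟩
  have : D.steinberg v + σ = D.steinberg v + τ := by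
    rw [← hlamv, ← hfix, hlamu, huveq]
  exact add_left_cancel this

end
end

section
/- Let λ ∈ P_I^+ and μ ∈ P with μ_+ = λ_+. If μ <_∅ λ, then μ_{I,+} <_∅ λ, where μ_{I,+} is the unique element of W_I·μ ∩ P_I^+. -/
/-!
Common setting: a finite crystallographic root system `R` with Weyl group `W` in a
Euclidean space `V` (we identify `𝔞*` with `𝔞 = V` via the inner product), a fixed set
of positive roots `Rpos`, simple roots `Pi`, fundamental weights `fw`, the weight
lattice `P`, dominant weights `Pplus`, and for a subset `I ⊆ Pi` of the simple roots the
parabolic subgroup `W_I`, its positive roots `R_I^+`, `P_I^+`, the set `W^I` of minimal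
coset representatives, lengths, the Bruhat order, the orderings `⪯`, `≤_∅`, `≤_I`, the
group algebra `ℂ[P]`, the orbit sums `m_I(λ)`, the compact torus `A` (encoded abstractly
through its normalized Haar measure and its orthonormal multiplicative characters
`e^λ = ev λ`, `λ ∈ P`), the weight function `δ_k` and the inner product `(·,·)_k`.
-/

open scoped RealInnerProductSpace BigOperators Classical
open MeasureTheory

noncomputable section

variable {V : Type*} [NormedAddCommGroup V] [InnerProductSpace ℝ V] [FiniteDimensional ℝ V]

/-! ### Auxiliary development for Statement 8 -/

namespace S8

lemma rRefl_apply {α : V} (hα : α ≠ 0) (x : V) :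
    rRefl α x = x - (2 * ⟪x, α⟫ / ⟪α, α⟫) • α := by
  have hαα : ⟪α, α⟫ ≠ 0 := fun h => hα (inner_self_eq_zero.mp h)
  set t : ℝ := ⟪x, α⟫ / ⟪α, α⟫ with ht
  have h1 : x - t • α ∈ (ℝ ∙ α)ᗮ := by
    rw [Submodule.mem_orthogonal]
    intro u hu
    rcases Submodule.mem_span_singleton.mp hu with ⟨c, rfl⟩
    rw [real_inner_smul_left, inner_sub_right, real_inner_smul_right]
    rw [ht]
    field_simp
    rw [real_inner_comm α x]
    ring
  have h2 : α ∈ ℝ ∙ α := Submodule.mem_span_singleton_self α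
  have hx : x = (x - t • α) + t • α := by abel
  calc rRefl α x = Submodule.reflection (ℝ ∙ α)ᗮ ((x - t • α) + t • α) := by rw [← hx]; rfl
    _ = Submodule.reflection (ℝ ∙ α)ᗮ (x - t • α) + t • Submodule.reflection (ℝ ∙ α)ᗮ α := by
        rw [map_add, _root_.map_smul]
    _ = (x - t • α) + t • (-α) := by
        rw [Submodule.reflection_mem_subspace_eq_self h1,
          Submodule.reflection_mem_subspace_orthogonal_precomplement_eq_neg h2]
    _ = x - (2 * t) • α := by
        rw [two_mul, add_smul, smul_neg]; abel
    _ = x - (2 * ⟪x, α⟫ / ⟪α, α⟫) • α := by rw [ht, mul_div_assoc]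

lemma rRefl_self {α : V} (hα : α ≠ 0) : rRefl α α = -α := by
  have hαα : ⟪α, α⟫ ≠ 0 := fun h => hα (inner_self_eq_zero.mp h)
  rw [rRefl_apply hα]
  rw [mul_div_assoc, div_self hαα, mul_one, two_smul]
  abel

lemma rRefl_inv (α : V) : (rRefl α)⁻¹ = rRefl α := Submodule.reflection_symm

lemma rRefl_mul_self (α : V) : rRefl α * rRefl α = 1 := by
  rw [← rRefl_inv α]; exact inv_mul_cancel _

lemma rRefl_rRefl (α : V) (x : V) : rRefl α (rRefl α x) = x := by
  have := congrArg (fun g => (g : V ≃ₗᵢ[ℝ] V) x) (rRefl_mul_self α)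
  simpa using this

lemma rRefl_smul {α : V} {c : ℝ} (hc : c ≠ 0) : rRefl (c • α) = rRefl α := by
  have h : (ℝ ∙ (c • α)) = ℝ ∙ α := Submodule.span_singleton_smul_eq (Ne.isUnit hc) α
  unfold rRefl
  exact congrArg (fun K : Submodule ℝ V => Submodule.reflection Kᗮ) h

lemma rRefl_conj (g : V ≃ₗᵢ[ℝ] V) {α : V} (hα : α ≠ 0) :
    g * rRefl α * g⁻¹ = rRefl (g α) := by
  have hgα : g α ≠ 0 := fun h => hα (by simpa using congrArg g.symm h)
  ext x
  have h1 : (g * rRefl α * g⁻¹) x = g (rRefl α (g.symm x)) := rfl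
  rw [h1, rRefl_apply hα, rRefl_apply hgα, map_sub, _root_.map_smul]
  have e1 : g (g.symm x) = x := g.apply_symm_apply x
  have e2 : ⟪g.symm x, α⟫ = ⟪x, g α⟫ := by
    rw [← g.inner_map_map (g.symm x) α, e1]
  have e3 : ⟪α, α⟫ = ⟪g α, g α⟫ := (g.inner_map_map α α).symm
  rw [e1, e2, e3]


set_option linter.unusedSectionVars false

set_option maxHeartbeats 1000000

/-- Words in the simple reflections indexed by a set `J` of roots. -/
def IsWord (J : Finset V) (l : List (V ≃ₗᵢ[ℝ] V)) : Prop :=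
  ∀ g ∈ l, ∃ β ∈ J, g = rRefl β

lemma IsWord.sublist {J : Finset V} {l l' : List (V ≃ₗᵢ[ℝ] V)}
    (h : IsWord J l) (hs : l'.Sublist l) : IsWord J l' :=
  fun g hg => h g (hs.subset hg)

lemma IsWord.mono {J J' : Finset V} {l : List (V ≃ₗᵢ[ℝ] V)}
    (h : IsWord J l) (hJ : J ⊆ J') : IsWord J' l :=
  fun g hg => by obtain ⟨β, hβ, rfl⟩ := h g hg; exact ⟨β, hJ hβ, rfl⟩

lemma IsWord.nil {J : Finset V} : IsWord J ([] : List (V ≃ₗᵢ[ℝ] V)) := by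
  intro g hg; simp at hg

lemma IsWord.prod_mem {J : Finset V} {l : List (V ≃ₗᵢ[ℝ] V)} (h : IsWord J l) :
    l.prod ∈ weylGen J := by
  apply Subgroup.list_prod_mem
  intro g hg
  obtain ⟨β, hβ, rfl⟩ := h g hg
  exact Subgroup.subset_closure ⟨β, hβ, rfl⟩

lemma IsWord.reverse_prod {J : Finset V} {l : List (V ≃ₗᵢ[ℝ] V)} (h : IsWord J l) :
    l.reverse.prod = (l.prod)⁻¹ := by
  induction l with
  | nil => simp
  | cons g t ih =>
      have hg := h g List.mem_cons_self
      obtain ⟨β, hβ, hgeq⟩ := hg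
      have ht : IsWord J t := fun x hx => h x (List.mem_cons_of_mem g hx)
      rw [List.reverse_cons, List.prod_append, ih ht, List.prod_cons, List.prod_nil,
        mul_one, List.prod_cons, mul_inv_rev]
      congr 1
      rw [hgeq, rRefl_inv]

lemma exists_word {J : Finset V} {w : V ≃ₗᵢ[ℝ] V} (h : w ∈ weylGen J) :
    ∃ l, IsWord J l ∧ l.prod = w := by
  induction h using Subgroup.closure_induction with
  | mem g hg =>
      obtain ⟨β, hβ, rfl⟩ := hg
      exact ⟨[rRefl β], fun g hg => ⟨β, hβ, by simpa using hg⟩, by simp⟩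
  | one => exact ⟨[], IsWord.nil, rfl⟩
  | mul a b _ _ iha ihb =>
      obtain ⟨la, hla, rfl⟩ := iha
      obtain ⟨lb, hlb, rfl⟩ := ihb
      exact ⟨la ++ lb, fun g hg => by
        rcases List.mem_append.mp hg with h' | h'
        · exact hla g h'
        · exact hlb g h', by simp⟩
  | inv a _ iha =>
      obtain ⟨la, hla, rfl⟩ := iha
      exact ⟨la.reverse, fun g hg => hla g (List.mem_reverse.mp hg), hla.reverse_prod⟩

section
variable (D : RootData V)

/-- The sum of the fundamental weights; positivity functional for roots. -/
def wt : V := ∑ α ∈ D.Pi, D.fw α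

lemma simple_mem_R {α : V} (hα : α ∈ D.Pi) : α ∈ D.R :=
  D.pos_subset (D.simple_subset hα)

lemma simple_ne_zero {α : V} (hα : α ∈ D.Pi) : α ≠ 0 :=
  D.nonzero α (simple_mem_R D hα)

lemma fw_inner {α β : V} (hα : α ∈ D.Pi) (hβ : β ∈ D.Pi) :
    ⟪D.fw α, β⟫ = if α = β then ⟪β, β⟫ / 2 else 0 := by
  have hβ0 : β ≠ 0 := simple_ne_zero D hβ
  have hββ : ⟪β, β⟫ ≠ 0 := fun h => hβ0 (inner_self_eq_zero.mp h)
  have h := D.fw_prop α hα β hβ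
  rw [real_inner_smul_right] at h
  have h2 : (2 : ℝ) / ⟪β, β⟫ ≠ 0 := div_ne_zero two_ne_zero hββ
  split_ifs at h ⊢ with hh
  · field_simp at h ⊢
    linarith [h]
  · exact (mul_eq_zero.mp h).resolve_left h2

lemma wt_inner_simple {α : V} (hα : α ∈ D.Pi) : ⟪wt D, α⟫ = ⟪α, α⟫ / 2 := by
  unfold wt
  rw [sum_inner]
  rw [Finset.sum_congr rfl (fun β hβ => fw_inner D hβ hα)]
  rw [Finset.sum_ite_eq' D.Pi α (fun _ => ⟪α, α⟫ / 2)]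
  simp [hα]

lemma wt_inner_simple_pos {α : V} (hα : α ∈ D.Pi) : 0 < ⟪wt D, α⟫ := by
  rw [wt_inner_simple D hα]
  have hne : ⟪α, α⟫ ≠ 0 := fun h => (simple_ne_zero D hα) (inner_self_eq_zero.mp h)
  have : 0 < ⟪α, α⟫ := lt_of_le_of_ne real_inner_self_nonneg (Ne.symm hne)
  linarith

lemma wt_pos {β : V} (hβ : β ∈ D.Rpos) : 0 < ⟪wt D, β⟫ := by
  obtain ⟨c, hc, hcomb⟩ := D.pos_comb β hβ
  have hβ0 : β ≠ 0 := D.nonzero β (D.pos_subset hβ)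
  rcases lt_or_ge 0 ⟪wt D, β⟫ with h | h
  · exact h
  · exfalso
    have hsum : ⟪wt D, β⟫ = ∑ γ ∈ D.Pi, c γ * ⟪wt D, γ⟫ := by
      rw [hcomb, inner_sum]
      exact Finset.sum_congr rfl (fun γ _ => real_inner_smul_right _ _ _)
    have hnn : ∀ γ ∈ D.Pi, 0 ≤ c γ * ⟪wt D, γ⟫ :=
      fun γ hγ => mul_nonneg (hc γ) (le_of_lt (wt_inner_simple_pos D hγ))
    have hz : ⟪wt D, β⟫ = 0 := le_antisymm h (hsum ▸ Finset.sum_nonneg hnn)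
    have : ∀ γ ∈ D.Pi, c γ * ⟪wt D, γ⟫ = 0 := by
      have := (Finset.sum_eq_zero_iff_of_nonneg hnn).mp (by rw [← hsum, hz])
      exact this
    have hc0 : ∀ γ ∈ D.Pi, c γ = 0 := fun γ hγ => by
      rcases mul_eq_zero.mp (this γ hγ) with h' | h'
      · exact h'
      · exact absurd h' (ne_of_gt (wt_inner_simple_pos D hγ))
    apply hβ0
    rw [hcomb]
    exact Finset.sum_eq_zero (fun γ hγ => by rw [hc0 γ hγ, zero_smul])

lemma neg_mem_R {β : V} (hβ : β ∈ D.R) : -β ∈ D.R := by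
  have := D.reflect_mem β hβ β hβ
  have hββ : ⟪β, β⟫ ≠ 0 := fun h => D.nonzero β hβ (inner_self_eq_zero.mp h)
  rw [mul_div_assoc, div_self hββ, mul_one, two_smul] at this
  have e : β - (β + β) = -β := by abel
  rwa [e] at this

lemma neg_pos_of_not_pos {β : V} (hβ : β ∈ D.R) (h : β ∉ D.Rpos) : -β ∈ D.Rpos := by
  by_contra h2
  exact h ((D.pos_or_neg β hβ).mpr h2)

lemma wt_neg {β : V} (hβ : β ∈ D.R) (h : β ∉ D.Rpos) : ⟪wt D, β⟫ < 0 := by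
  have := wt_pos D (neg_pos_of_not_pos D hβ h)
  rw [inner_neg_right] at this
  linarith

lemma wt_ne_zero {β : V} (hβ : β ∈ D.R) : ⟪wt D, β⟫ ≠ 0 := by
  by_cases h : β ∈ D.Rpos
  · exact ne_of_gt (wt_pos D h)
  · exact ne_of_lt (wt_neg D hβ h)

lemma mem_pos_iff_wt {β : V} (hβ : β ∈ D.R) : β ∈ D.Rpos ↔ 0 < ⟪wt D, β⟫ := by
  constructor
  · exact wt_pos D
  · intro h
    by_contra h2
    exact absurd h (not_lt.mpr (le_of_lt (wt_neg D hβ h2)))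

end


section
variable (D : RootData V)

lemma inner_zero_on_span {s : Set V} {v x : V} (h : ∀ u ∈ s, ⟪v, u⟫ = 0)
    (hx : x ∈ Submodule.span ℝ s) : ⟪v, x⟫ = 0 := by
  induction hx using Submodule.span_induction with
  | mem u hu => exact h u hu
  | zero => simp
  | add a b _ _ ha hb => rw [inner_add_right, ha, hb, add_zero]
  | smul c a _ ha => rw [real_inner_smul_right, ha, mul_zero]

lemma pos_comb_support {J : Finset V} (hJ : J ⊆ D.Pi) {γ : V} (hγ : γ ∈ D.Rpos)
    (hsp : γ ∈ Submodule.span ℝ (J : Set V)) :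
    ∃ c : V → ℝ, (∀ δ, 0 ≤ c δ) ∧ γ = ∑ δ ∈ J, c δ • δ := by
  obtain ⟨c, hc, hcomb⟩ := D.pos_comb γ hγ
  have hzero : ∀ δ₀ ∈ D.Pi, δ₀ ∉ J → c δ₀ = 0 := by
    intro δ₀ hδ₀ hδ₀J
    have horth : ⟪D.fw δ₀, γ⟫ = 0 := by
      refine inner_zero_on_span (fun u hu => ?_) hsp
      rw [fw_inner D hδ₀ (hJ hu)]
      have : δ₀ ≠ u := fun h => hδ₀J (h ▸ hu)
      simp [this]
    have hterm : ∀ δ ∈ D.Pi, ⟪D.fw δ₀, c δ • δ⟫ = if δ₀ = δ then c δ * (⟪δ, δ⟫ / 2) else 0 := by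
      intro δ hδ
      rw [real_inner_smul_right, fw_inner D hδ₀ hδ, mul_ite, mul_zero]
    have hval : ⟪D.fw δ₀, γ⟫ = c δ₀ * (⟪δ₀, δ₀⟫ / 2) := by
      rw [hcomb, inner_sum, Finset.sum_congr rfl hterm,
        Finset.sum_ite_eq D.Pi δ₀ (fun δ => c δ * (⟪δ, δ⟫ / 2))]
      simp [hδ₀]
    have hδ0 : δ₀ ≠ 0 := simple_ne_zero D hδ₀
    have hne : ⟪δ₀, δ₀⟫ ≠ 0 := fun h => hδ0 (inner_self_eq_zero.mp h)
    have := horth ▸ hval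
    rcases mul_eq_zero.mp this.symm with h' | h'
    · exact h'
    · exact absurd h' (div_ne_zero hne two_ne_zero)
  refine ⟨c, hc, ?_⟩
  rw [hcomb]
  exact (Finset.sum_subset hJ (fun x hx hnx => by rw [hzero x hx hnx, zero_smul])).symm

lemma rRefl_mem_R' {β γ : V} (hβ : β ∈ D.R) (hγ : γ ∈ D.R) : rRefl β γ ∈ D.R := by
  rw [rRefl_apply (D.nonzero β hβ)]
  exact D.reflect_mem β hβ γ hγ

lemma rRefl_mem_span {J : Finset V} {β γ : V} (hβ : β ∈ J) (hβ0 : β ≠ 0)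
    (hγ : γ ∈ Submodule.span ℝ (J : Set V)) :
    rRefl β γ ∈ Submodule.span ℝ (J : Set V) := by
  rw [rRefl_apply hβ0]
  exact Submodule.sub_mem _ hγ (Submodule.smul_mem _ _ (Submodule.subset_span hβ))

lemma reflect_simple_pos {J : Finset V} (hJ : J ⊆ D.Pi) {β γ : V} (hβ : β ∈ J)
    (hγp : γ ∈ D.Rpos) (hγs : γ ∈ Submodule.span ℝ (J : Set V))
    (hpar : ∀ c : ℝ, γ ≠ c • β) : rRefl β γ ∈ D.Rpos := by
  have hβPi := hJ hβ
  have hβR := simple_mem_R D hβPi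
  have hβ0 := simple_ne_zero D hβPi
  have hγR := D.pos_subset hγp
  have hsR : rRefl β γ ∈ D.R := rRefl_mem_R' D hβR hγR
  by_contra hneg
  have hnegpos : -(rRefl β γ) ∈ D.Rpos := neg_pos_of_not_pos D hsR hneg
  have hnegspan : -(rRefl β γ) ∈ Submodule.span ℝ (J : Set V) :=
    Submodule.neg_mem _ (rRefl_mem_span hβ hβ0 hγs)
  obtain ⟨c, hc, hcomb⟩ := pos_comb_support D hJ hγp hγs
  obtain ⟨d, hd, hdcomb⟩ := pos_comb_support D hJ hnegpos hnegspan
  have key : (∑ δ ∈ J, (c δ + d δ) • δ) = (2 * ⟪γ, β⟫ / ⟪β, β⟫) • β := by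
    have e1 : (∑ δ ∈ J, (c δ + d δ) • δ) = (∑ δ ∈ J, c δ • δ) + ∑ δ ∈ J, d δ • δ := by
      rw [← Finset.sum_add_distrib]
      exact Finset.sum_congr rfl (fun δ _ => add_smul _ _ _)
    rw [e1, ← hcomb, ← hdcomb, rRefl_apply hβ0]
    abel
  have czero : ∀ δ ∈ J, δ ≠ β → c δ = 0 := by
    intro δ hδ hδβ
    have hδPi := hJ hδ
    have hterm : ∀ δ' ∈ J, ⟪D.fw δ, (c δ' + d δ') • δ'⟫ =
        if δ = δ' then (c δ' + d δ') * (⟪δ', δ'⟫ / 2) else 0 := by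
      intro δ' hδ'
      rw [real_inner_smul_right, fw_inner D hδPi (hJ hδ'), mul_ite, mul_zero]
    have h1 : ⟪D.fw δ, ∑ δ' ∈ J, (c δ' + d δ') • δ'⟫ = (c δ + d δ) * (⟪δ, δ⟫ / 2) := by
      rw [inner_sum, Finset.sum_congr rfl hterm,
        Finset.sum_ite_eq J δ (fun δ' => (c δ' + d δ') * (⟪δ', δ'⟫ / 2))]
      simp [hδ]
    have h2 : ⟪D.fw δ, (2 * ⟪γ, β⟫ / ⟪β, β⟫) • β⟫ = 0 := by
      rw [real_inner_smul_right, fw_inner D hδPi hβPi]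
      simp [hδβ]
    rw [key, h2] at h1
    have hδ0 : δ ≠ 0 := simple_ne_zero D hδPi
    have hne : ⟪δ, δ⟫ ≠ 0 := fun h => hδ0 (inner_self_eq_zero.mp h)
    rcases mul_eq_zero.mp h1.symm with h' | h'
    · have : 0 ≤ c δ := hc δ
      have : 0 ≤ d δ := hd δ
      linarith [hc δ, hd δ, h']
    · exact absurd h' (div_ne_zero hne two_ne_zero)
  apply hpar (c β)
  rw [hcomb]
  rw [← Finset.sum_subset (Finset.singleton_subset_iff.mpr hβ)
    (fun x hx hnx => by rw [czero x hx (by simpa using hnx), zero_smul])]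
  simp

lemma word_apply_mem_R {J : Finset V} (hJ : J ⊆ D.Pi) :
    ∀ l : List (V ≃ₗᵢ[ℝ] V), IsWord J l → ∀ x ∈ D.R, l.prod x ∈ D.R := by
  intro l
  induction l with
  | nil => intro _ x hx; simpa using hx
  | cons g t ih =>
      intro hw x hx
      obtain ⟨β, hβ, hgeq⟩ := hw g List.mem_cons_self
      have ht : IsWord J t := fun y hy => hw y (List.mem_cons_of_mem g hy)
      have : (g :: t).prod x = g (t.prod x) := by rw [List.prod_cons]; rfl
      rw [this, hgeq]
      exact rRefl_mem_R' D (simple_mem_R D (hJ hβ)) (ih ht x hx)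

lemma word_apply_mem_span {J : Finset V} (hJ : J ⊆ D.Pi) :
    ∀ l : List (V ≃ₗᵢ[ℝ] V), IsWord J l → ∀ x ∈ Submodule.span ℝ (J : Set V),
      l.prod x ∈ Submodule.span ℝ (J : Set V) := by
  intro l
  induction l with
  | nil => intro _ x hx; simpa using hx
  | cons g t ih =>
      intro hw x hx
      obtain ⟨β, hβ, hgeq⟩ := hw g List.mem_cons_self
      have ht : IsWord J t := fun y hy => hw y (List.mem_cons_of_mem g hy)
      have : (g :: t).prod x = g (t.prod x) := by rw [List.prod_cons]; rfl
      rw [this, hgeq]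
      exact rRefl_mem_span hβ (simple_ne_zero D (hJ hβ)) (ih ht x hx)

lemma exchange {J : Finset V} (hJ : J ⊆ D.Pi) :
    ∀ l : List (V ≃ₗᵢ[ℝ] V), IsWord J l → ∀ β ∈ J, ⟪wt D, l.prod β⟫ < 0 →
    ∃ l₂ : List (V ≃ₗᵢ[ℝ] V), l₂.Sublist l ∧ l₂.prod = l.prod * rRefl β ∧
      l₂.length + 1 = l.length := by
  intro l
  induction l with
  | nil =>
      intro _ β hβ hneg
      exfalso
      have : (([] : List (V ≃ₗᵢ[ℝ] V)).prod) β = β := rfl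
      rw [this] at hneg
      exact absurd hneg (not_lt.mpr (le_of_lt (wt_pos D (D.simple_subset (hJ hβ)))))
  | cons g t ih =>
      intro hw β hβ hneg
      obtain ⟨δ, hδ, hgeq⟩ := hw g List.mem_cons_self
      have ht : IsWord J t := fun y hy => hw y (List.mem_cons_of_mem g hy)
      have hβPi := hJ hβ
      have hβR := simple_mem_R D hβPi
      have hβ0 := simple_ne_zero D hβPi
      set γ := t.prod β with hγ
      have hγR : γ ∈ D.R := word_apply_mem_R D hJ t ht β hβR
      have hγspan : γ ∈ Submodule.span ℝ (J : Set V) :=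
        word_apply_mem_span D hJ t ht β (Submodule.subset_span hβ)
      have happ : (g :: t).prod β = g γ := by rw [List.prod_cons]; rfl
      rcases lt_trichotomy ⟪wt D, γ⟫ 0 with hlt | heq | hgt
      · obtain ⟨l₂', hs, hp, hlen⟩ := ih ht β hβ hlt
        refine ⟨g :: l₂', hs.cons₂ g, ?_, by simp only [List.length_cons]; omega⟩
        rw [List.prod_cons, List.prod_cons, hp, mul_assoc]
      · exact absurd heq (wt_ne_zero D hγR)
      · have hγpos : γ ∈ D.Rpos := (mem_pos_iff_wt D hγR).mpr hgt
        have hneg' : rRefl δ γ ∉ D.Rpos := by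
          intro hp
          have := wt_pos D hp
          rw [happ, hgeq] at hneg
          linarith
        have hpar : ∃ cc : ℝ, γ = cc • δ := by
          by_contra hnp
          push_neg at hnp
          exact hneg' (reflect_simple_pos D hJ hδ hγpos hγspan hnp)
        obtain ⟨cc, hcc⟩ := hpar
        have hγ0 : γ ≠ 0 := D.nonzero γ hγR
        have hcc0 : cc ≠ 0 := by
          rintro rfl
          rw [zero_smul] at hcc
          exact hγ0 hcc
        have hrr : rRefl γ = rRefl δ := by rw [hcc, rRefl_smul hcc0]
        have hconj : rRefl γ = t.prod * rRefl β * (t.prod)⁻¹ := by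
          rw [hγ, ← rRefl_conj (t.prod) hβ0]
        refine ⟨t, List.sublist_cons_self g t, ?_, by simp⟩
        rw [List.prod_cons, hgeq]
        calc t.prod = t.prod * (rRefl β * rRefl β) := by rw [rRefl_mul_self, mul_one]
          _ = (t.prod * rRefl β * (t.prod)⁻¹) * (t.prod * rRefl β) := by group
          _ = rRefl γ * (t.prod * rRefl β) := by rw [← hconj]
          _ = rRefl δ * t.prod * rRefl β := by rw [hrr, mul_assoc]

lemma exchange_left {J : Finset V} (hJ : J ⊆ D.Pi) {l : List (V ≃ₗᵢ[ℝ] V)}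
    (hl : IsWord J l) {β : V} (hβ : β ∈ J) (hneg : ⟪wt D, (l.prod)⁻¹ β⟫ < 0) :
    ∃ l₂ : List (V ≃ₗᵢ[ℝ] V), l₂.Sublist l ∧ l₂.prod = rRefl β * l.prod ∧
      l₂.length + 1 = l.length := by
  have hrev : IsWord J l.reverse := fun g hg => hl g (List.mem_reverse.mp hg)
  have hp : l.reverse.prod = (l.prod)⁻¹ := hl.reverse_prod
  obtain ⟨m, hms, hmp, hml⟩ := exchange D hJ l.reverse hrev β hβ (by rw [hp]; exact hneg)
  refine ⟨m.reverse, ?_, ?_, by simpa using hml⟩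
  · have := hms.reverse
    simpa using this
  · have hmw : IsWord J m := hrev.sublist hms
    rw [hmw.reverse_prod, hmp, hp, mul_inv_rev, inv_inv, rRefl_inv]

end


section
variable (D : RootData V)

/-- The set of word lengths of `w` over letters from `J`. -/
def wordSet (J : Finset V) (w : V ≃ₗᵢ[ℝ] V) : Set ℕ :=
  {n | ∃ l : List (V ≃ₗᵢ[ℝ] V), IsWord J l ∧ l.prod = w ∧ l.length = n}

/-- Minimal word length. -/
def wLen (J : Finset V) (w : V ≃ₗᵢ[ℝ] V) : ℕ := sInf (wordSet J w)

lemma wLen_le {J : Finset V} {w : V ≃ₗᵢ[ℝ] V} {l : List (V ≃ₗᵢ[ℝ] V)}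
    (hl : IsWord J l) (hp : l.prod = w) : wLen J w ≤ l.length :=
  Nat.sInf_le ⟨l, hl, hp, rfl⟩

lemma exists_min_word {J : Finset V} {w : V ≃ₗᵢ[ℝ] V} (hw : w ∈ weylGen J) :
    ∃ l : List (V ≃ₗᵢ[ℝ] V), IsWord J l ∧ l.prod = w ∧ l.length = wLen J w := by
  obtain ⟨l, hl, hp⟩ := exists_word hw
  have hne : (wordSet J w).Nonempty := ⟨l.length, l, hl, hp, rfl⟩
  exact Nat.sInf_mem hne

lemma rRefl_mem_weylGen {J : Finset V} {β : V} (hβ : β ∈ J) : rRefl β ∈ weylGen J :=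
  Subgroup.subset_closure ⟨β, hβ, rfl⟩

lemma wLen_lt_mul_refl {J : Finset V} (hJ : J ⊆ D.Pi) {w : V ≃ₗᵢ[ℝ] V}
    (hw : w ∈ weylGen J) {β : V} (hβ : β ∈ J) (hpos : 0 < ⟪wt D, w β⟫) :
    wLen J w < wLen J (w * rRefl β) := by
  have hβ0 : β ≠ 0 := simple_ne_zero D (hJ hβ)
  have hwr : w * rRefl β ∈ weylGen J := mul_mem hw (rRefl_mem_weylGen hβ)
  obtain ⟨m, hmw, hmp, hml⟩ := exists_min_word hwr
  have hneg : ⟪wt D, m.prod β⟫ < 0 := by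
    have e : m.prod β = w (rRefl β β) := by rw [hmp]; rfl
    rw [e, rRefl_self hβ0, map_neg, inner_neg_right]
    linarith
  obtain ⟨l₂, hs, hp2, hlen2⟩ := exchange D hJ m hmw β hβ hneg
  have hpw : l₂.prod = w := by
    rw [hp2, hmp, mul_assoc, rRefl_mul_self, mul_one]
  have h1 : wLen J w ≤ l₂.length := wLen_le (hmw.sublist (by exact hs)) hpw
  omega

lemma dominantI_of_simple {J : Finset V} (hJ : J ⊆ D.Pi) {z : V}
    (h : ∀ β ∈ J, 0 ≤ ⟪z, β⟫) : D.DominantI J z := by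
  intro γ hγ
  obtain ⟨hγp, hγs⟩ := hγ
  obtain ⟨c, hc, hcomb⟩ := pos_comb_support D hJ hγp hγs
  rw [hcomb, inner_sum]
  exact Finset.sum_nonneg (fun δ hδ => by
    rw [real_inner_smul_right]
    exact mul_nonneg (hc δ) (h δ hδ))

lemma exists_descent {J : Finset V} (hJ : J ⊆ D.Pi) {z : V}
    (h : ¬ D.DominantI J z) : ∃ β ∈ J, ⟪z, β⟫ < 0 := by
  by_contra hc
  push_neg at hc
  exact h (dominantI_of_simple D hJ hc)

lemma simple_mem_RposI {J : Finset V} (hJ : J ⊆ D.Pi) {β : V} (hβ : β ∈ J) :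
    β ∈ D.RposI J :=
  ⟨D.simple_subset (hJ hβ), Submodule.subset_span hβ⟩

lemma unique_dominantI {J : Finset V} (hJ : J ⊆ D.Pi) :
    ∀ n : ℕ, ∀ w ∈ weylGen J, wLen J w ≤ n →
    ∀ ν ν' : V, D.DominantI J ν → D.DominantI J ν' → w ν = ν' → ν = ν' := by
  intro n
  induction n with
  | zero =>
      intro w hw hlen ν ν' hν hν' heq
      obtain ⟨m, hmw, hmp, hml⟩ := exists_min_word hw
      have hm0 : m = [] := List.length_eq_zero_iff.mp (by omega)
      rw [hm0] at hmp
      rw [← heq, ← hmp]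
      rfl
  | succ n ih =>
      intro w hw hlen ν ν' hν hν' heq
      by_cases h0 : wLen J w ≤ n
      · exact ih w hw h0 ν ν' hν hν' heq
      · have hlen' : wLen J w = n + 1 := by omega
        obtain ⟨m, hmw, hmp, hml⟩ := exists_min_word hw
        have hmne : m ≠ [] := by
          intro h
          rw [h] at hml
          simp at hml
          omega
        obtain ⟨g, hg⟩ : ∃ g, m.getLast hmne = g := ⟨_, rfl⟩
        have hsplit : m = m.dropLast ++ [g] := by
          rw [← hg]
          exact (List.dropLast_append_getLast hmne).symm
        obtain ⟨β, hβ, hgeq⟩ := hmw g (by rw [hsplit]; simp)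
        have hβ0 : β ≠ 0 := simple_ne_zero D (hJ hβ)
        have hdw : IsWord J m.dropLast := hmw.sublist (List.dropLast_sublist m)
        have hdprod : m.dropLast.prod = w * rRefl β := by
          have : m.prod = m.dropLast.prod * g := by
            conv_lhs => rw [hsplit]
            rw [List.prod_append, List.prod_cons, List.prod_nil, mul_one]
          rw [hmp] at this
          rw [← hgeq]
          rw [this, mul_assoc]
          have : g * g = 1 := by rw [hgeq]; exact rRefl_mul_self β
          rw [this, mul_one]
        have hwr : w * rRefl β ∈ weylGen J := mul_mem hw (rRefl_mem_weylGen hβ)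
        have hwrlen : wLen J (w * rRefl β) ≤ n := by
          have := wLen_le hdw hdprod
          have hdl : m.dropLast.length = n := by
            have := List.length_dropLast (xs := m)
            omega
          omega
        -- sign analysis of w β
        have hwβR : w β ∈ D.R := by
          rw [← hmp]
          exact word_apply_mem_R D hJ m hmw β (simple_mem_R D (hJ hβ))
        have hwβspan : w β ∈ Submodule.span ℝ (J : Set V) := by
          rw [← hmp]
          exact word_apply_mem_span D hJ m hmw β (Submodule.subset_span hβ)
        have hneg : ⟪wt D, w β⟫ < 0 := by
          rcases lt_trichotomy ⟪wt D, w β⟫ 0 with h' | h' | h'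
          · exact h'
          · exact absurd h' (wt_ne_zero D hwβR)
          · exfalso
            have := wLen_lt_mul_refl D hJ hw hβ h'
            omega
        have hnegmem : -(w β) ∈ D.RposI J := by
          refine ⟨neg_pos_of_not_pos D hwβR ?_, Submodule.neg_mem _ hwβspan⟩
          intro hp
          exact absurd (wt_pos D hp) (not_lt.mpr (le_of_lt hneg))
        have h1 : ⟪ν', w β⟫ ≤ 0 := by
          have := hν' _ hnegmem
          rw [inner_neg_right] at this
          linarith
        have h2 : ⟪ν', w β⟫ = ⟪ν, β⟫ := by
          rw [← heq, w.inner_map_map ν β]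
        have h3 : 0 ≤ ⟪ν, β⟫ := hν _ (simple_mem_RposI D hJ hβ)
        have h4 : ⟪ν, β⟫ = 0 := le_antisymm (by rw [← h2]; exact h1) h3
        have hfix : rRefl β ν = ν := by
          rw [rRefl_apply hβ0, h4]
          simp
        have heq' : (w * rRefl β) ν = ν' := by
          have : (w * rRefl β) ν = w (rRefl β ν) := rfl
          rw [this, hfix, heq]
        exact ih (w * rRefl β) hwr hwrlen ν ν' hν hν' heq'

end


section
variable (D : RootData V)

lemma root_smul_int {α : V} (hα : α ∈ D.R) {c : ℝ} (hmem : c • α ∈ D.R) :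
    ∃ n : ℤ, (n : ℝ) = 2 * c := by
  obtain ⟨n, hn⟩ := D.crystallographic α hα (c • α) hmem
  refine ⟨n, ?_⟩
  have hα0 : α ≠ 0 := D.nonzero α hα
  have hαα : ⟪α, α⟫ ≠ 0 := fun h => hα0 (inner_self_eq_zero.mp h)
  rw [← hn, real_inner_smul_left]
  field_simp

lemma rRefl_inner_swap (α : V) (z x : V) : ⟪rRefl α z, x⟫ = ⟪z, rRefl α x⟫ := by
  have h := (rRefl α).inner_map_map z (rRefl α x)
  rw [rRefl_rRefl] at h
  exact h

/-- The indivisible positive roots. -/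
def Rind : Finset V := D.Rpos.filter (fun β => ¬ ((2⁻¹ : ℝ) • β ∈ D.R))

lemma Rind_subset : Rind D ⊆ D.Rpos := Finset.filter_subset _ _

lemma indiv_unique {α β : V} (hα : α ∈ Rind D) (hβ : β ∈ Rind D) {c : ℝ}
    (hc : 0 < c) (heq : β = c • α) : β = α := by
  obtain ⟨hαp, hαi⟩ := Finset.mem_filter.mp hα
  obtain ⟨hβp, hβi⟩ := Finset.mem_filter.mp hβ
  have hαR := D.pos_subset hαp
  have hβR := D.pos_subset hβp
  have hc0 : c ≠ 0 := ne_of_gt hc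
  obtain ⟨n, hn⟩ := root_smul_int D hαR (heq ▸ hβR)
  have hainv : α = c⁻¹ • β := by rw [heq, smul_smul, inv_mul_cancel₀ hc0, one_smul]
  obtain ⟨m, hm⟩ := root_smul_int D hβR (hainv ▸ hαR)
  have hnm : (n : ℝ) * (m : ℝ) = 4 := by
    rw [hn, hm]
    field_simp
    ring
  have hnm' : n * m = 4 := by
    have : ((n * m : ℤ) : ℝ) = ((4 : ℤ) : ℝ) := by push_cast; rw [hnm]
    exact_mod_cast this
  have hnpos : 0 < n := by
    have : (0 : ℝ) < (n : ℝ) := by rw [hn]; positivity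
    exact_mod_cast this
  have hmpos : 0 < m := by
    have : (0 : ℝ) < (m : ℝ) := by
      rw [hm]
      positivity
    exact_mod_cast this
  have hn4 : n ≤ 4 := by nlinarith
  interval_cases n
  · -- n = 1 : c = 1/2
    exfalso
    have hc2 : c = 2⁻¹ := by
      have : (1 : ℝ) = 2 * c := by exact_mod_cast hn
      linarith
    apply hαi
    rw [hc2] at heq
    exact heq ▸ hβR
  · -- n = 2 : c = 1
    have hc1 : c = 1 := by
      have : (2 : ℝ) = 2 * c := by exact_mod_cast hn
      linarith
    rw [heq, hc1, one_smul]
  · -- n = 3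
    omega
  · -- n = 4 : c = 2
    exfalso
    have hc2 : c = 2 := by
      have : (4 : ℝ) = 2 * c := by exact_mod_cast hn
      linarith
    apply hβi
    have : (2⁻¹ : ℝ) • β = α := by
      rw [heq, hc2, smul_smul]
      norm_num
    exact this ▸ hαR

/-- The indivisible positive root parallel to a positive root. -/
def indivOf (α : V) : V := if (2⁻¹ : ℝ) • α ∈ D.R then (2⁻¹ : ℝ) • α else α

lemma indivOf_spec {α : V} (hα : α ∈ D.Rpos) :
    indivOf D α ∈ Rind D ∧ ∃ c : ℝ, 0 < c ∧ indivOf D α = c • α := by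
  have hαR := D.pos_subset hα
  by_cases h : (2⁻¹ : ℝ) • α ∈ D.R
  · have hpos : (2⁻¹ : ℝ) • α ∈ D.Rpos := by
      rw [mem_pos_iff_wt D h, real_inner_smul_right]
      have := wt_pos D hα
      positivity
    have hind : indivOf D α = (2⁻¹ : ℝ) • α := by simp [indivOf, h]
    rw [hind]
    refine ⟨Finset.mem_filter.mpr ⟨hpos, ?_⟩, ⟨2⁻¹, by norm_num, rfl⟩⟩
    intro hq
    have he : (2⁻¹ : ℝ) • (2⁻¹ : ℝ) • α = (4⁻¹ : ℝ) • α := by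
      rw [smul_smul]; norm_num
    rw [he] at hq
    obtain ⟨n, hn⟩ := root_smul_int D hαR hq
    have : (2 : ℝ) * (n : ℝ) = 1 := by rw [hn]; norm_num
    have : ((2 * n : ℤ) : ℝ) = ((1 : ℤ) : ℝ) := by push_cast; linarith
    have : 2 * n = 1 := by exact_mod_cast this
    omega
  · simp only [indivOf, h, if_false]
    exact ⟨Finset.mem_filter.mpr ⟨hα, h⟩, 1, one_pos, (one_smul _ _).symm⟩

lemma indiv_parallel_eq {α β : V} (hα : α ∈ D.Rpos) (hβ : β ∈ Rind D)
    {c : ℝ} (heq : β = c • α) : β = indivOf D α := by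
  obtain ⟨haRind, c', hc', haeq⟩ := indivOf_spec D hα
  have hβp := Rind_subset D hβ
  have hcpos : 0 < c := by
    have h1 := wt_pos D hβp
    have h2 := wt_pos D hα
    rw [heq, real_inner_smul_right] at h1
    nlinarith
  have hc'0 : c' ≠ 0 := ne_of_gt hc'
  have heq2 : β = (c * c'⁻¹) • indivOf D α := by
    rw [haeq, smul_smul, mul_assoc, inv_mul_cancel₀ hc'0, mul_one, ← heq]
  exact indiv_unique D haRind hβ (by positivity) heq2

lemma pos_mem_span_Pi {β : V} (hβ : β ∈ D.Rpos) :
    β ∈ Submodule.span ℝ ((D.Pi : Finset V) : Set V) := by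
  obtain ⟨c, hc, hcomb⟩ := D.pos_comb β hβ
  rw [hcomb]
  exact Submodule.sum_mem _ (fun δ hδ => Submodule.smul_mem _ _ (Submodule.subset_span hδ))

end


section
variable (D : RootData V)

lemma rRefl_indivOf {α : V} (hα : α ∈ D.Rpos) :
    rRefl α (indivOf D α) = -(indivOf D α) := by
  obtain ⟨_, c, hc, haeq⟩ := indivOf_spec D hα
  have hα0 : α ≠ 0 := D.nonzero α (D.pos_subset hα)
  rw [haeq, _root_.map_smul, rRefl_self hα0, smul_neg]

lemma rRefl_mem_Rind {α : V} (hα : α ∈ D.Pi) {β : V} (hβ : β ∈ Rind D)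
    (hne : β ≠ indivOf D α) : rRefl α β ∈ Rind D := by
  obtain ⟨hβp, hβi⟩ := Finset.mem_filter.mp hβ
  have hαp := D.simple_subset hα
  have hpar : ∀ c : ℝ, β ≠ c • α := by
    intro c hc
    exact hne (indiv_parallel_eq D hαp hβ hc)
  have hpos : rRefl α β ∈ D.Rpos :=
    reflect_simple_pos D (subset_refl D.Pi) hα hβp (pos_mem_span_Pi D hβp) hpar
  refine Finset.mem_filter.mpr ⟨hpos, ?_⟩
  intro hq
  have h2 : rRefl α ((2⁻¹ : ℝ) • (rRefl α β)) ∈ D.R :=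
    rRefl_mem_R' D (simple_mem_R D hα) hq
  rw [_root_.map_smul, rRefl_rRefl] at h2
  exact hβi h2

/-- The inversion count of `y` : the number of indivisible positive roots on which
`y` is negative. -/
def invCt (y : V) : ℕ := ((Rind D).filter (fun β => ⟪y, β⟫ < 0)).card

lemma invCt_zero_of_dominant {y : V} (hy : D.Dominant y) : invCt D y = 0 := by
  rw [invCt, Finset.card_eq_zero, Finset.filter_eq_empty_iff]
  intro β hβ
  exact not_lt.mpr (hy β (Rind_subset D hβ))

lemma erase_filter_card {α : V} (hα : α ∈ D.Pi) (z : V) :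
    ((((Rind D).filter (fun β => ⟪rRefl α z, β⟫ < 0)).erase (indivOf D α)).card) =
    ((((Rind D).filter (fun β => ⟪z, β⟫ < 0)).erase (indivOf D α)).card) := by
  have hαp := D.simple_subset hα
  obtain ⟨haRind, c, hc, haeq⟩ := indivOf_spec D hαp
  have key : (((Rind D).filter (fun β => ⟪rRefl α z, β⟫ < 0)).erase (indivOf D α)) =
      (((Rind D).filter (fun β => ⟪z, β⟫ < 0)).erase (indivOf D α)).image
        (fun β => rRefl α β) := by
    ext x
    simp only [Finset.mem_erase, Finset.mem_filter, Finset.mem_image]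
    constructor
    · rintro ⟨hxa, hxRind, hxneg⟩
      refine ⟨rRefl α x, ⟨?_, ?_, ?_⟩, rRefl_rRefl α x⟩
      · intro h
        have hxe : x = -(indivOf D α) := by
          rw [← rRefl_rRefl α x, h, rRefl_indivOf D hαp]
        have h1 : 0 < ⟪wt D, x⟫ := wt_pos D (Rind_subset D hxRind)
        have h2 : 0 < ⟪wt D, indivOf D α⟫ := wt_pos D (Rind_subset D haRind)
        rw [hxe, inner_neg_right] at h1
        linarith
      · exact rRefl_mem_Rind D hα hxRind hxa
      · rw [← rRefl_inner_swap]
        exact hxneg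
    · rintro ⟨b, ⟨hba, hbRind, hbneg⟩, rfl⟩
      refine ⟨?_, rRefl_mem_Rind D hα hbRind hba, ?_⟩
      · intro h
        have hbe : b = -(indivOf D α) := by
          rw [← rRefl_rRefl α b, h, rRefl_indivOf D hαp]
        have h1 : 0 < ⟪wt D, b⟫ := wt_pos D (Rind_subset D hbRind)
        have h2 : 0 < ⟪wt D, indivOf D α⟫ := wt_pos D (Rind_subset D haRind)
        rw [hbe, inner_neg_right] at h1
        linarith
      · rw [rRefl_inner_swap, rRefl_rRefl]
        exact hbneg
  rw [key, Finset.card_image_of_injective _ (rRefl α).injective]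

lemma inner_indivOf {α : V} (hα : α ∈ D.Rpos) (z : V) :
    ∃ c : ℝ, 0 < c ∧ ⟪z, indivOf D α⟫ = c * ⟪z, α⟫ := by
  obtain ⟨_, c, hc, haeq⟩ := indivOf_spec D hα
  exact ⟨c, hc, by rw [haeq, real_inner_smul_right]⟩

lemma invCt_refl_lt {α : V} (hα : α ∈ D.Pi) {z : V} (hz : ⟪z, α⟫ < 0) :
    invCt D (rRefl α z) + 1 = invCt D z := by
  have hαp := D.simple_subset hα
  obtain ⟨haRind, -⟩ := indivOf_spec D hαp
  obtain ⟨c, hc, hinner⟩ := inner_indivOf D hαp z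
  have hmem : indivOf D α ∈ (Rind D).filter (fun β => ⟪z, β⟫ < 0) := by
    refine Finset.mem_filter.mpr ⟨haRind, ?_⟩
    rw [hinner]
    exact mul_neg_of_pos_of_neg hc hz
  have hnmem : indivOf D α ∉ (Rind D).filter (fun β => ⟪rRefl α z, β⟫ < 0) := by
    rw [Finset.mem_filter]
    rintro ⟨-, hneg⟩
    rw [rRefl_inner_swap, rRefl_indivOf D hαp, inner_neg_right, hinner] at hneg
    nlinarith
  have e1 : ((Rind D).filter (fun β => ⟪rRefl α z, β⟫ < 0)).erase (indivOf D α) =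
      (Rind D).filter (fun β => ⟪rRefl α z, β⟫ < 0) :=
    Finset.erase_eq_of_notMem hnmem
  have e2 := Finset.card_erase_add_one hmem
  have e3 := erase_filter_card D hα z
  rw [e1] at e3
  rw [invCt, invCt, e3, e2]

lemma invCt_refl_gt {α : V} (hα : α ∈ D.Pi) {z : V} (hz : 0 < ⟪z, α⟫) :
    invCt D (rRefl α z) = invCt D z + 1 := by
  have h2 : ⟪rRefl α z, α⟫ < 0 := by
    rw [rRefl_inner_swap, rRefl_self (simple_ne_zero D hα), inner_neg_right]
    linarith
  have := invCt_refl_lt D hα h2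
  rw [rRefl_rRefl] at this
  omega

lemma rRefl_fix {α : V} (hα : α ≠ 0) {z : V} (hz : ⟪z, α⟫ = 0) : rRefl α z = z := by
  rw [rRefl_apply hα, hz]
  simp

end


section
variable (D : RootData V)

lemma word_inv_apply_mem_R {l : List (V ≃ₗᵢ[ℝ] V)} (hl : IsWord D.Pi l) {x : V}
    (hx : x ∈ D.R) : (l.prod)⁻¹ x ∈ D.R := by
  rw [← hl.reverse_prod]
  exact word_apply_mem_R D (subset_refl _) _
    (fun g hg => hl g (List.mem_reverse.mp hg)) x hx

lemma wt_neg_of_inv {l : List (V ≃ₗᵢ[ℝ] V)} (hl : IsWord D.Pi l) {z β : V}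
    (hβ : β ∈ D.R) (hdom : D.Dominant ((l.prod)⁻¹ z)) (hneg : ⟪z, β⟫ < 0) :
    ⟪wt D, (l.prod)⁻¹ β⟫ < 0 := by
  have hiR : (l.prod)⁻¹ β ∈ D.R := word_inv_apply_mem_R D hl hβ
  have hinner : ⟪(l.prod)⁻¹ z, (l.prod)⁻¹ β⟫ < 0 := by
    rw [((l.prod)⁻¹).inner_map_map z β]
    exact hneg
  by_cases hc : (l.prod)⁻¹ β ∈ D.Rpos
  · exact absurd (hdom _ hc) (not_le.mpr hinner)
  · exact wt_neg D hiR hc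

lemma invCt_le_word : ∀ l : List (V ≃ₗᵢ[ℝ] V), IsWord D.Pi l → ∀ y : V,
    D.Dominant ((l.prod)⁻¹ y) → invCt D y ≤ l.length := by
  intro l
  induction l with
  | nil =>
      intro _ y hy
      have he : ((List.prod ([] : List (V ≃ₗᵢ[ℝ] V)))⁻¹) y = y := rfl
      rw [he] at hy
      rw [invCt_zero_of_dominant D hy]
      exact Nat.zero_le _
  | cons g t ih =>
      intro hw y hy
      obtain ⟨α, hα, hgeq⟩ := hw g List.mem_cons_self
      have ht : IsWord D.Pi t := fun x hx => hw x (List.mem_cons_of_mem g hx)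
      have he : ((g :: t).prod)⁻¹ y = (t.prod)⁻¹ (rRefl α y) := by
        rw [List.prod_cons, mul_inv_rev, hgeq, rRefl_inv]
        rfl
      rw [he] at hy
      have ihy := ih ht (rRefl α y) hy
      have hα0 := simple_ne_zero D hα
      rcases lt_trichotomy ⟪y, α⟫ 0 with h' | h' | h'
      · have := invCt_refl_lt D hα h'
        simp only [List.length_cons]
        omega
      · rw [rRefl_fix hα0 h'] at ihy
        simp only [List.length_cons]
        omega
      · have := invCt_refl_gt D hα h'
        simp only [List.length_cons]
        omega

lemma straighten : ∀ l : List (V ≃ₗᵢ[ℝ] V), IsWord D.Pi l → ∀ y : V,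
    D.Dominant ((l.prod)⁻¹ y) →
    ∃ l₀ : List (V ≃ₗᵢ[ℝ] V), l₀.Sublist l ∧ D.Dominant ((l₀.prod)⁻¹ y) ∧
      l₀.length = invCt D y := by
  intro l
  induction l with
  | nil =>
      intro _ y hy
      have he : ((List.prod ([] : List (V ≃ₗᵢ[ℝ] V)))⁻¹) y = y := rfl
      refine ⟨[], List.Sublist.refl _, hy, ?_⟩
      rw [he] at hy
      rw [invCt_zero_of_dominant D hy]
      rfl
  | cons g t ih =>
      intro hw y hy
      obtain ⟨α, hα, hgeq⟩ := hw g List.mem_cons_self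
      have ht : IsWord D.Pi t := fun x hx => hw x (List.mem_cons_of_mem g hx)
      have hα0 := simple_ne_zero D hα
      set z := rRefl α y with hzdef
      have he : ((g :: t).prod)⁻¹ y = (t.prod)⁻¹ z := by
        rw [List.prod_cons, mul_inv_rev, hgeq, rRefl_inv]
        rfl
      rw [he] at hy
      obtain ⟨t₁, hsub, hdom, hlen⟩ := ih ht z hy
      have hyz : y = rRefl α z := by rw [hzdef, rRefl_rRefl]
      have ht₁ : IsWord D.Pi t₁ := ht.sublist hsub
      rcases lt_trichotomy ⟪z, α⟫ 0 with h' | h' | h'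
      · have hneg : ⟪wt D, (t₁.prod)⁻¹ α⟫ < 0 :=
          wt_neg_of_inv D ht₁ (simple_mem_R D hα) hdom h'
        obtain ⟨t₂, hsub2, hprod2, hlen2⟩ :=
          exchange_left D (subset_refl _) ht₁ hα hneg
        refine ⟨t₂, (hsub2.trans hsub).trans (List.sublist_cons_self g t), ?_, ?_⟩
        · have he2 : ((t₂.prod)⁻¹) y = ((t₁.prod)⁻¹) z := by
            rw [hprod2, mul_inv_rev, rRefl_inv]
            rfl
          rw [he2]
          exact hdom
        · have hic := invCt_refl_lt D hα h'
          rw [← hyz] at hic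
          omega
      · have hy0 : ⟪y, α⟫ = 0 := by
          have hzα : ⟪z, α⟫ = -⟪y, α⟫ := by
            rw [hzdef, rRefl_inner_swap, rRefl_self hα0, inner_neg_right]
          linarith
        have hzy : z = y := by rw [hzdef, rRefl_fix hα0 hy0]
        refine ⟨t₁, hsub.trans (List.sublist_cons_self g t), ?_, ?_⟩
        · rw [← hzy]; exact hdom
        · rw [← hzy]; exact hlen
      · refine ⟨g :: t₁, hsub.cons₂ g, ?_, ?_⟩
        · have he2 : ((g :: t₁).prod)⁻¹ y = (t₁.prod)⁻¹ z := by
            rw [List.prod_cons, mul_inv_rev, hgeq, rRefl_inv]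
            rfl
          rw [he2]
          exact hdom
        · have hic := invCt_refl_gt D hα h'
          rw [← hyz] at hic
          simp only [List.length_cons]
          omega

lemma descend (I : Finset V) (hI : I ⊆ D.Pi) {y : V} (hy : D.DominantI I y) :
    ∀ n : ℕ, ∀ z : V, invCt D z ≤ n →
    ∀ r : List (V ≃ₗᵢ[ℝ] V), IsWord I r → r.prod z = y →
    ∀ t₁ : List (V ≃ₗᵢ[ℝ] V), IsWord D.Pi t₁ → D.Dominant ((t₁.prod)⁻¹ z) →
      t₁.length = invCt D z →
    ∃ t₀ : List (V ≃ₗᵢ[ℝ] V), t₀.Sublist t₁ ∧ D.Dominant ((t₀.prod)⁻¹ y) ∧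
      t₀.length = invCt D y := by
  intro n
  induction n with
  | zero =>
      intro z hzn r hr hry t₁ ht₁ hdom hlen
      by_cases hzd : D.DominantI I z
      · have hzy : z = y :=
          unique_dominantI D hI (wLen I r.prod) r.prod hr.prod_mem le_rfl z y hzd hy hry
        exact ⟨t₁, List.Sublist.refl _, by rw [← hzy]; exact hdom, by rw [← hzy]; exact hlen⟩
      · exfalso
        obtain ⟨β, hβ, hβneg⟩ := exists_descent D hI hzd
        have := invCt_refl_lt D (hI hβ) hβneg
        omega
  | succ n ih =>
      intro z hzn r hr hry t₁ ht₁ hdom hlen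
      by_cases hzd : D.DominantI I z
      · have hzy : z = y :=
          unique_dominantI D hI (wLen I r.prod) r.prod hr.prod_mem le_rfl z y hzd hy hry
        exact ⟨t₁, List.Sublist.refl _, by rw [← hzy]; exact hdom, by rw [← hzy]; exact hlen⟩
      · obtain ⟨β, hβ, hβneg⟩ := exists_descent D hI hzd
        have hβPi := hI hβ
        have hβ0 := simple_ne_zero D hβPi
        set z' := rRefl β z with hz'
        have hic := invCt_refl_lt D hβPi hβneg
        rw [← hz'] at hic
        have hneg : ⟪wt D, (t₁.prod)⁻¹ β⟫ < 0 :=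
          wt_neg_of_inv D ht₁ (simple_mem_R D hβPi) hdom hβneg
        obtain ⟨t₂, hsub2, hprod2, hlen2⟩ :=
          exchange_left D (subset_refl _) ht₁ hβPi hneg
        have hdom' : D.Dominant ((t₂.prod)⁻¹ z') := by
          have he2 : (t₂.prod)⁻¹ z' = (t₁.prod)⁻¹ z := by
            rw [hprod2, mul_inv_rev, rRefl_inv]
            show (t₁.prod)⁻¹ (rRefl β z') = (t₁.prod)⁻¹ z
            rw [hz', rRefl_rRefl]
          rw [he2]
          exact hdom
        have hry' : (r ++ [rRefl β]).prod z' = y := by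
          rw [List.prod_append, List.prod_cons, List.prod_nil, mul_one]
          show r.prod (rRefl β z') = y
          rw [hz', rRefl_rRefl]
          exact hry
        have hr' : IsWord I (r ++ [rRefl β]) := by
          intro x hx
          rcases List.mem_append.mp hx with h'' | h''
          · exact hr x h''
          · exact ⟨β, hβ, by simpa using h''⟩
        obtain ⟨t₀, hs0, hd0, hl0⟩ :=
          ih z' (by omega) (r ++ [rRefl β]) hr' hry' t₂ (ht₁.sublist hsub2) hdom' (by omega)
        exact ⟨t₀, hs0.trans hsub2, hd0, hl0⟩

lemma invCt_lt_orbit (I : Finset V) (hI : I ⊆ D.Pi) {y : V} (hy : D.DominantI I y) :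
    ∀ n : ℕ, ∀ z : V, invCt D z ≤ n → ∀ r : List (V ≃ₗᵢ[ℝ] V), IsWord I r →
      r.prod z = y → z ≠ y → invCt D y < invCt D z := by
  intro n
  induction n with
  | zero =>
      intro z hzn r hr hry hne
      by_cases hzd : D.DominantI I z
      · exact absurd
          (unique_dominantI D hI (wLen I r.prod) r.prod hr.prod_mem le_rfl z y hzd hy hry) hne
      · exfalso
        obtain ⟨β, hβ, hβneg⟩ := exists_descent D hI hzd
        have := invCt_refl_lt D (hI hβ) hβneg
        omega
  | succ n ih =>
      intro z hzn r hr hry hne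
      by_cases hzd : D.DominantI I z
      · exact absurd
          (unique_dominantI D hI (wLen I r.prod) r.prod hr.prod_mem le_rfl z y hzd hy hry) hne
      · obtain ⟨β, hβ, hβneg⟩ := exists_descent D hI hzd
        have hβPi := hI hβ
        set z' := rRefl β z with hz'
        have hic := invCt_refl_lt D hβPi hβneg
        rw [← hz'] at hic
        have hry' : (r ++ [rRefl β]).prod z' = y := by
          rw [List.prod_append, List.prod_cons, List.prod_nil, mul_one]
          show r.prod (rRefl β z') = y
          rw [hz', rRefl_rRefl]
          exact hry
        have hr' : IsWord I (r ++ [rRefl β]) := by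
          intro x hx
          rcases List.mem_append.mp hx with h'' | h''
          · exact hr x h''
          · exact ⟨β, hβ, by simpa using h''⟩
        by_cases hz'y : z' = y
        · rw [hz'y] at hic
          omega
        · have := ih z' (by omega) (r ++ [rRefl β]) hr' hry' hz'y
          omega

end


section
variable (D : RootData V)

lemma len_eq_wLen (w : V ≃ₗᵢ[ℝ] V) : D.len w = wLen D.Pi w := rfl

lemma weylP_le {I : Finset V} (hI : I ⊆ D.Pi) : D.WeylP I ≤ D.Weyl := by
  apply Subgroup.closure_mono
  rintro w ⟨α, hα, rfl⟩
  exact ⟨α, hI hα, rfl⟩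

lemma dominant_norm_eq {a b : V} (ha : D.Dominant a) (hb : D.Dominant b)
    (hnorm : ⟪a, a⟫ = ⟪b, b⟫) (hpre : D.preceq a b) : a = b := by
  obtain ⟨c, hc⟩ := hpre
  have h1 : ⟪b - a, b + a⟫ = 0 := by
    rw [inner_sub_left, inner_add_right, inner_add_right, real_inner_comm a b]
    linarith
  have hsum : ⟪b - a, b + a⟫ = ∑ α ∈ D.Pi, (c α : ℝ) * ⟪α, b + a⟫ := by
    rw [hc, sum_inner]
    exact Finset.sum_congr rfl (fun α _ => real_inner_smul_left _ _ _)
  have hterm : ∀ α ∈ D.Pi, 0 ≤ (c α : ℝ) * ⟪α, b + a⟫ := by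
    intro α hα
    have hαp := D.simple_subset hα
    have h2 := ha α hαp
    have h3 := hb α hαp
    refine mul_nonneg (Nat.cast_nonneg _) ?_
    rw [inner_add_right]
    linarith [real_inner_comm α b, real_inner_comm b α, real_inner_comm α a,
      real_inner_comm a α]
  have hzero : ∀ α ∈ D.Pi, (c α : ℝ) * ⟪α, b + a⟫ = 0 := by
    have := (Finset.sum_eq_zero_iff_of_nonneg hterm).mp (by rw [← hsum, h1])
    exact this
  have hzero2 : ∀ α ∈ D.Pi, (c α : ℝ) * ⟪α, b - a⟫ = 0 := by
    intro α hα
    rcases mul_eq_zero.mp (hzero α hα) with h' | h'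
    · rw [h', zero_mul]
    · have hαp := D.simple_subset hα
      have h2 := ha α hαp
      have h3 := hb α hαp
      rw [inner_add_right] at h'
      have hab : ⟪α, b⟫ = 0 ∧ ⟪α, a⟫ = 0 := by
        constructor <;>
          linarith [real_inner_comm α b, real_inner_comm b α, real_inner_comm α a,
            real_inner_comm a α]
      rw [inner_sub_right, hab.1, hab.2, sub_zero, mul_zero]
  have h3 : ⟪b - a, b - a⟫ = 0 := by
    have : ⟪b - a, b - a⟫ = ∑ α ∈ D.Pi, (c α : ℝ) * ⟪α, b - a⟫ := by
      have e0 : ⟪b - a, b - a⟫ = ⟪∑ α ∈ D.Pi, (c α : ℝ) • α, b - a⟫ :=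
        congrArg (fun x => (inner ℝ x (b - a) : ℝ)) hc
      rw [e0, sum_inner]
      exact Finset.sum_congr rfl (fun α _ => real_inner_smul_left _ _ _)
    rw [this]
    exact Finset.sum_eq_zero hzero2
  have h4 : b - a = 0 := inner_self_eq_zero.mp h3
  have : b = a := by
    have := sub_eq_zero.mp h4
    exact this
  exact this.symm

end

end S8


/-- Let `λ ∈ P_I^+` and `μ ∈ P` with `μ₊ = λ₊` (i.e. `μ ∈ W·λ`).
If `μ <_∅ λ`, then `μ_{I,+} <_∅ λ`, where `μ_{I,+}` is the unique element of
`W_I·μ ∩ P_I^+`. -/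
theorem statement_8 (D : RootData V) (I : Finset V) (hI : I ⊆ D.Pi)
    (lam : V) (hlam : lam ∈ D.PplusI I) (mu : V) (hmu : mu ∈ D.P)
    (horb : ∃ w ∈ D.Weyl, w lam = mu)
    (hlt : D.ltEmpty mu lam)
    (muI : V) (hmuI : muI ∈ D.PplusI I) (hmuIorb : ∃ w ∈ D.WeylP I, w mu = muI) :
    D.ltEmpty muI lam := by
  obtain ⟨hle, hne⟩ := hlt
  obtain ⟨lamP, muP, hlamP, hmuP, ⟨w1, hw1W, hw1⟩, ⟨w2, hw2W, hw2⟩, hdisj⟩ := hle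
  obtain ⟨w0, hw0W, hw0⟩ := horb
  obtain ⟨u, huW, hu⟩ := hmuIorb
  have hIle : D.WeylP I ≤ D.Weyl := S8.weylP_le D hI
  have hnormlam : ⟪lamP, lamP⟫ = ⟪muP, muP⟫ := by
    have e1 : ⟪mu, mu⟫ = ⟪lamP, lamP⟫ := by rw [← hw1]; exact w1.inner_map_map lamP lamP
    have e2 : ⟪lam, lam⟫ = ⟪muP, muP⟫ := by rw [← hw2]; exact w2.inner_map_map muP muP
    have e3 : ⟪mu, mu⟫ = ⟪lam, lam⟫ := by rw [← hw0]; exact w0.inner_map_map lam lam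
    linarith
  rcases hdisj with ⟨hpre, hneq⟩ | ⟨heqP, vl, vm, hvl, hvm, hbru⟩
  · exact absurd (S8.dominant_norm_eq D hlamP.2 hmuP.2 hnormlam hpre) hneq
  -- second branch
  rw [← heqP] at hw2 hmuP
  obtain ⟨l, hlword, hlprod, hllen, l', hl'sub, hl'prod⟩ := hbru
  have hlword' : S8.IsWord D.Pi l := hlword
  have hl'word : S8.IsWord D.Pi l' := hlword'.sublist hl'sub
  have hdom_mu : D.Dominant ((l'.prod)⁻¹ mu) := by rw [hl'prod]; exact hvl.2.1
  obtain ⟨t₁, ht₁sub, ht₁dom, ht₁len⟩ := S8.straighten D l' hl'word mu hdom_mu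
  have ht₁word : S8.IsWord D.Pi t₁ := hl'word.sublist ht₁sub
  obtain ⟨r, hrword, hrprod⟩ := S8.exists_word (J := I) huW
  have hmuIdom : D.DominantI I muI := hmuI.2
  obtain ⟨t₀, ht₀sub, ht₀dom, ht₀len⟩ :=
    S8.descend D I hI hmuIdom (S8.invCt D mu) mu le_rfl r hrword
      (by rw [hrprod]; exact hu) t₁ ht₁word ht₁dom ht₁len
  have ht₀word : S8.IsWord D.Pi t₀ := ht₁word.sublist ht₀sub
  have hvWeyl : t₀.prod ∈ D.Weyl := ht₀word.prod_mem
  -- lower bound for arbitrary transporters of muI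
  have hLB : ∀ u' ∈ D.Weyl, D.Dominant (u'⁻¹ muI) → S8.invCt D muI ≤ D.len u' := by
    intro u' hu'W hu'dom
    obtain ⟨m, hmw, hmp, hml⟩ := S8.exists_min_word (J := D.Pi) hu'W
    have h2 := S8.invCt_le_word D m hmw muI (by rw [hmp]; exact hu'dom)
    rw [S8.len_eq_wLen]
    omega
  have hIsVbar : D.IsVbar muI t₀.prod := by
    refine ⟨hvWeyl, ht₀dom, ?_⟩
    intro u' hu'W hu'dom
    have h1 : D.len t₀.prod ≤ t₀.length := by
      rw [S8.len_eq_wLen]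
      exact S8.wLen_le ht₀word rfl
    have h2 := hLB u' hu'W hu'dom
    omega
  have hbru2 : D.bruhatLE t₀.prod vm :=
    ⟨l, hlword, hlprod, hllen, t₀, (ht₀sub.trans ht₁sub).trans hl'sub, rfl⟩
  have hneq2 : muI ≠ lam := by
    intro heq
    have hstrict : S8.invCt D lam < S8.invCt D mu :=
      S8.invCt_lt_orbit D I hI hlam.2 (S8.invCt D mu) mu le_rfl r hrword
        (by rw [hrprod, hu, heq]) hne
    have hA : S8.invCt D mu ≤ D.len vl := by
      obtain ⟨m, hmw, hmp, hml⟩ := S8.exists_min_word (J := D.Pi) hvl.1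
      have h2 := S8.invCt_le_word D m hmw mu (by rw [hmp]; exact hvl.2.1)
      rw [S8.len_eq_wLen]
      omega
    have hB : D.len vl ≤ l'.length := by
      rw [S8.len_eq_wLen]
      exact S8.wLen_le hl'word hl'prod
    have hC : l'.length ≤ l.length := hl'sub.length_le
    have hE : D.len vm ≤ S8.invCt D lam := by
      obtain ⟨s2, hs2w, hs2p⟩ := S8.exists_word (J := D.Pi) hw2W
      have hdoml : D.Dominant ((s2.prod)⁻¹ lam) := by
        rw [hs2p, ← hw2]
        have e : w2⁻¹ (w2 lamP) = lamP := w2.symm_apply_apply lamP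
        rw [e]
        exact hlamP.2
      obtain ⟨t₃, ht₃sub, ht₃dom, ht₃len⟩ := S8.straighten D s2 hs2w lam hdoml
      have ht₃word : S8.IsWord D.Pi t₃ := hs2w.sublist ht₃sub
      have hmin := hvm.2.2 (t₃.prod) ht₃word.prod_mem ht₃dom
      have h3 : D.len t₃.prod ≤ t₃.length := by
        rw [S8.len_eq_wLen]
        exact S8.wLen_le ht₃word rfl
      omega
    omega
  refine ⟨?_, hneq2⟩
  refine ⟨lamP, lamP, hlamP, hmuP, ⟨u * w1, mul_mem (hIle huW) hw1W, ?_⟩,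
    ⟨w2, hw2W, hw2⟩, Or.inr ⟨rfl, t₀.prod, vm, hIsVbar, hvm, hbru2⟩⟩
  show u (w1 lamP) = muI
  rw [hw1, hu]

end
end

section
/- Let λ ∈ P_I^+, let w_0^{I,λ} be the longest element of the stabilizer W_{I,λ} of λ in W_I, and let w_0^I be the longest element of W_I. Then λ̃ = w_0^{I,λ}(λ − w_0^I v(w_0^I λ)^{-1} ρ(k)); equivalently, v(λ) = v(w_0^I λ) w_0^I w_0^{I,λ}. -/
/-!
Common setting: a finite crystallographic root system `R` with Weyl group `W` in a
Euclidean space `V` (we identify `𝔞*` with `𝔞 = V` via the inner product), a fixed set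
of positive roots `Rpos`, simple roots `Pi`, fundamental weights `fw`, the weight
lattice `P`, dominant weights `Pplus`, and for a subset `I ⊆ Pi` of the simple roots the
parabolic subgroup `W_I`, its positive roots `R_I^+`, `P_I^+`, the set `W^I` of minimal
coset representatives, lengths, the Bruhat order, the orderings `⪯`, `≤_∅`, `≤_I`, the
group algebra `ℂ[P]`, the orbit sums `m_I(λ)`, the compact torus `A` (encoded abstractly
through its normalized Haar measure and its orthonormal multiplicative characters
`e^λ = ev λ`, `λ ∈ P`), the weight function `δ_k` and the inner product `(·,·)_k`.
-/

open scoped RealInnerProductSpace BigOperators Classical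
open MeasureTheory

noncomputable section

variable {V : Type*} [NormedAddCommGroup V] [InnerProductSpace ℝ V] [FiniteDimensional ℝ V]

/-! ### Auxiliary development for Statement 10 -/

section Statement10Aux

set_option linter.unusedSectionVars false

variable {V : Type*} [NormedAddCommGroup V] [InnerProductSpace ℝ V] [FiniteDimensional ℝ V]

theorem rRefl_apply (α x : V) : rRefl α x = x - (2 * ⟪x, α⟫ / ⟪α, α⟫) • α := by
  rw [rRefl, Submodule.reflection_apply, Submodule.starProjection_orthogonal_val, Submodule.starProjection_singleton,
    real_inner_self_eq_norm_sq, real_inner_comm α x]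
  simp only [RCLike.ofReal_real_eq_id, id_eq, two_smul]
  module

theorem rRefl_inv (α : V) : (rRefl α)⁻¹ = rRefl α := Submodule.reflection_symm

theorem rRefl_sq (α : V) : rRefl α * rRefl α = 1 := by
  rw [show rRefl α * rRefl α = (rRefl α)⁻¹ * rRefl α by rw [rRefl_inv]]
  exact inv_mul_cancel (rRefl α)

theorem rRefl_self (α : V) : rRefl α α = -α :=
  Submodule.reflection_orthogonalComplement_singleton_eq_neg α

theorem rRefl_fix {α x : V} (h : ⟪x, α⟫ = 0) : rRefl α x = x := by
  rw [rRefl_apply, h]; simp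

theorem rRefl_smul {c : ℝ} (hc : c ≠ 0) (α : V) : rRefl (c • α) = rRefl α := by
  ext x
  rw [rRefl_apply, rRefl_apply]
  rcases eq_or_ne α 0 with rfl | hα
  · simp
  · have hαα : ⟪α, α⟫ ≠ 0 := inner_self_ne_zero.mpr hα
    rw [real_inner_smul_right, real_inner_smul_left, real_inner_smul_right, smul_smul]
    have : 2 * (c * ⟪x, α⟫) / (c * (c * ⟪α, α⟫)) * c = 2 * ⟪x, α⟫ / ⟪α, α⟫ := by
      field_simp
    rw [this]

theorem rRefl_smul_self {c : ℝ} (α : V) : rRefl α (c • α) = -(c • α) := by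
  rw [LinearIsometryEquiv.map_smul, rRefl_self, smul_neg]

theorem rRefl_conj (w : V ≃ₗᵢ[ℝ] V) (α : V) :
    w * rRefl α * w⁻¹ = rRefl (w α) := by
  ext x
  have h1 : ⟪(w.symm : V → V) x, α⟫ = ⟪x, w α⟫ := by
    conv_rhs => rw [← w.apply_symm_apply x]
    exact (w.inner_map_map _ _).symm
  have h2 : ⟪w α, w α⟫ = ⟪α, α⟫ := w.inner_map_map α α
  show w (rRefl α (w.symm x)) = rRefl (w α) x
  rw [rRefl_apply, rRefl_apply, map_sub, LinearIsometryEquiv.map_smul, h1, h2,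
    LinearIsometryEquiv.apply_symm_apply]

end Statement10Aux

section Statement10Aux2

set_option linter.unusedSectionVars false
set_option maxHeartbeats 1000000

variable {V : Type*} [NormedAddCommGroup V] [InnerProductSpace ℝ V] [FiniteDimensional ℝ V]

namespace RootData

theorem simple_mem_R (D : RootData V) {γ : V} (hγ : γ ∈ D.Pi) : γ ∈ D.R :=
  D.pos_subset (D.simple_subset hγ)

theorem simple_ne_zero (D : RootData V) {γ : V} (hγ : γ ∈ D.Pi) : γ ≠ 0 :=
  D.nonzero γ (D.simple_mem_R hγ)

theorem inner_fw (D : RootData V) {γ β : V} (hγ : γ ∈ D.Pi) (hβ : β ∈ D.Pi) :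
    ⟪D.fw γ, β⟫ = if γ = β then ⟪β, β⟫ / 2 else 0 := by
  have hb0 : β ≠ 0 := D.simple_ne_zero hβ
  have hbb : ⟪β, β⟫ ≠ (0 : ℝ) := inner_self_ne_zero.mpr hb0
  have h := D.fw_prop γ hγ β hβ
  rw [real_inner_smul_right] at h
  have h2 : ⟪D.fw γ, β⟫ = (⟪β, β⟫ / 2) * (2 / ⟪β, β⟫ * ⟪D.fw γ, β⟫) := by
    field_simp
  rw [h2, h]
  split_ifs <;> ring

/-- Pairing a fundamental weight against a linear combination of simple roots. -/
theorem pair_sum (D : RootData V) (c : V → ℝ) {γ : V} (hγ : γ ∈ D.Pi) :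
    ⟪D.fw γ, ∑ δ ∈ D.Pi, c δ • δ⟫ = c γ * (⟪γ, γ⟫ / 2) := by
  rw [inner_sum]
  rw [Finset.sum_eq_single γ]
  · rw [real_inner_smul_right, D.inner_fw hγ hγ, if_pos rfl]
  · intro δ hδ hne
    rw [real_inner_smul_right, D.inner_fw hγ hδ, if_neg (Ne.symm hne), mul_zero]
  · intro h; exact absurd hγ h

/-- Uniqueness of coefficients over the simple roots. -/
theorem coeff_ext (D : RootData V) {c d : V → ℝ}
    (h : ∑ δ ∈ D.Pi, c δ • δ = ∑ δ ∈ D.Pi, d δ • δ) {γ : V} (hγ : γ ∈ D.Pi) :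
    c γ = d γ := by
  have h1 := D.pair_sum c hγ
  rw [h, D.pair_sum d hγ] at h1
  have hγγ : ⟪γ, γ⟫ / 2 ≠ (0 : ℝ) := by
    have : ⟪γ, γ⟫ ≠ (0 : ℝ) := inner_self_ne_zero.mpr (D.simple_ne_zero hγ)
    simpa using this
  exact mul_right_cancel₀ hγγ h1.symm

/-- The distinguished regular dominant vector. -/
noncomputable def fvec (D : RootData V) : V := ∑ β ∈ D.Pi, D.fw β

theorem inner_fvec_simple (D : RootData V) {γ : V} (hγ : γ ∈ D.Pi) :
    ⟪D.fvec, γ⟫ = ⟪γ, γ⟫ / 2 := by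
  rw [fvec, sum_inner, Finset.sum_eq_single γ]
  · rw [D.inner_fw hγ hγ, if_pos rfl]
  · intro δ hδ hne
    rw [D.inner_fw hδ hγ, if_neg hne]
  · intro h; exact absurd hγ h

theorem inner_self_pos' {x : V} (hx : x ≠ 0) : (0 : ℝ) < ⟪x, x⟫ := by
  rw [real_inner_self_eq_norm_sq]
  exact pow_pos (norm_pos_iff.mpr hx) 2

theorem inner_fvec_simple_pos (D : RootData V) {γ : V} (hγ : γ ∈ D.Pi) :
    0 < ⟪D.fvec, γ⟫ := by
  rw [D.inner_fvec_simple hγ]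
  have := inner_self_pos' (D.simple_ne_zero hγ)
  linarith

theorem fvec_pos (D : RootData V) {α : V} (hα : α ∈ D.Rpos) : 0 < ⟪D.fvec, α⟫ := by
  obtain ⟨c, hc, hrep⟩ := D.pos_comb α hα
  have hne : ∃ δ ∈ D.Pi, c δ ≠ 0 := by
    by_contra h
    push_neg at h
    have : α = 0 := by
      rw [hrep, Finset.sum_eq_zero]
      intro δ hδ
      rw [h δ hδ, zero_smul]
    exact D.nonzero α (D.pos_subset hα) this
  obtain ⟨δ₀, hδ₀, hcδ₀⟩ := hne
  rw [hrep, inner_sum]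
  have : ∀ δ ∈ D.Pi, 0 ≤ ⟪D.fvec, c δ • δ⟫ := by
    intro δ hδ
    rw [real_inner_smul_right]
    exact mul_nonneg (hc δ) (le_of_lt (D.inner_fvec_simple_pos hδ))
  refine Finset.sum_pos' this ⟨δ₀, hδ₀, ?_⟩
  rw [real_inner_smul_right]
  exact mul_pos (lt_of_le_of_ne (hc δ₀) (Ne.symm hcδ₀)) (D.inner_fvec_simple_pos hδ₀)

theorem neg_mem_R (D : RootData V) {α : V} (hα : α ∈ D.R) : -α ∈ D.R := by
  have h := D.reflect_mem α hα α hα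
  have hαα : ⟪α, α⟫ ≠ (0 : ℝ) := inner_self_ne_zero.mpr (D.nonzero α hα)
  have h2 : 2 * ⟪α, α⟫ / ⟪α, α⟫ = (2 : ℝ) := by field_simp
  rw [h2] at h
  have h3 : α - (2 : ℝ) • α = -α := by module
  rwa [h3] at h

theorem not_pos_neg (D : RootData V) {α : V} (hα : α ∈ D.R) (h : α ∉ D.Rpos) :
    -α ∈ D.Rpos := by
  by_contra h2
  exact h ((D.pos_or_neg α hα).mpr h2)

theorem mem_Rpos_iff (D : RootData V) {α : V} (hα : α ∈ D.R) :
    α ∈ D.Rpos ↔ 0 < ⟪D.fvec, α⟫ := by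
  constructor
  · exact D.fvec_pos
  · intro h
    by_contra hn
    have := D.fvec_pos (D.not_pos_neg hα hn)
    rw [inner_neg_right] at this
    linarith

theorem not_mem_Rpos_of_nonpos (D : RootData V) {α : V} (h : ⟪D.fvec, α⟫ ≤ 0) :
    α ∉ D.Rpos := fun hp => absurd (D.fvec_pos hp) (not_lt.mpr h)

end RootData

/-! ### Words in simple reflections -/

/-- `l` is a word in the reflections attached to elements of `S`. -/
def sword (S : Finset V) (l : List (V ≃ₗᵢ[ℝ] V)) : Prop :=
  ∀ g ∈ l, ∃ γ ∈ S, g = rRefl γ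

theorem sword_nil {S : Finset V} : sword S ([] : List (V ≃ₗᵢ[ℝ] V)) := by
  intro g hg; exact absurd hg List.not_mem_nil

theorem sword_append {S : Finset V} {l₁ l₂ : List (V ≃ₗᵢ[ℝ] V)}
    (h₁ : sword S l₁) (h₂ : sword S l₂) : sword S (l₁ ++ l₂) := by
  intro g hg
  rcases List.mem_append.mp hg with h | h
  · exact h₁ g h
  · exact h₂ g h

theorem sword_reverse {S : Finset V} {l : List (V ≃ₗᵢ[ℝ] V)} (h : sword S l) :
    sword S l.reverse := fun g hg => h g (List.mem_reverse.mp hg)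

theorem sword_prod_reverse {S : Finset V} :
    ∀ {l : List (V ≃ₗᵢ[ℝ] V)}, sword S l → l.reverse.prod = l.prod⁻¹
  | [], _ => by simp
  | g :: t, h => by
    have ht : sword S t := fun x hx => h x (List.mem_cons_of_mem g hx)
    obtain ⟨γ, _, rfl⟩ := h (g := g) List.mem_cons_self
    rw [List.reverse_cons, List.prod_append, List.prod_singleton, List.prod_cons, mul_inv_rev,
      sword_prod_reverse ht, rRefl_inv]

theorem sword_prod_mem {S : Finset V} :
    ∀ {l : List (V ≃ₗᵢ[ℝ] V)}, sword S l → l.prod ∈ weylGen S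
  | [], _ => by simp [one_mem]
  | g :: t, h => by
    have ht : sword S t := fun x hx => h x (List.mem_cons_of_mem g hx)
    obtain ⟨γ, hγ, hg⟩ := h (g := g) List.mem_cons_self
    rw [List.prod_cons]
    exact mul_mem (Subgroup.subset_closure ⟨γ, hγ, hg⟩) (sword_prod_mem ht)

theorem exists_sword {S : Finset V} {w : V ≃ₗᵢ[ℝ] V} (hw : w ∈ weylGen S) :
    ∃ l, sword S l ∧ l.prod = w := by
  induction hw using Subgroup.closure_induction with
  | mem x hx => exact ⟨[x], fun g hg => by rwa [List.mem_singleton.mp hg], List.prod_singleton⟩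
  | one => exact ⟨[], sword_nil, List.prod_nil⟩
  | mul x y hx hy ihx ihy =>
      obtain ⟨l₁, h₁, rfl⟩ := ihx
      obtain ⟨l₂, h₂, rfl⟩ := ihy
      exact ⟨l₁ ++ l₂, sword_append h₁ h₂, List.prod_append⟩
  | inv x hx ihx =>
      obtain ⟨l, h, rfl⟩ := ihx
      exact ⟨l.reverse, sword_reverse h, sword_prod_reverse h⟩

namespace RootData

theorem weyl_eq_weylGen (D : RootData V) : D.Weyl = weylGen D.Pi := rfl

theorem len_le_word (D : RootData V) {l : List (V ≃ₗᵢ[ℝ] V)} (h : sword D.Pi l) :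
    D.len l.prod ≤ l.length :=
  Nat.sInf_le ⟨l, h, rfl, rfl⟩

theorem exists_reduced (D : RootData V) {w : V ≃ₗᵢ[ℝ] V} (hw : w ∈ D.Weyl) :
    ∃ l, sword D.Pi l ∧ l.prod = w ∧ l.length = D.len w := by
  have hne : {n | ∃ l : List (V ≃ₗᵢ[ℝ] V),
      (∀ g ∈ l, ∃ α ∈ D.Pi, g = rRefl α) ∧ l.prod = w ∧ l.length = n}.Nonempty := by
    obtain ⟨l, hl, hp⟩ := exists_sword (D.weyl_eq_weylGen ▸ hw)
    exact ⟨l.length, l, hl, hp, rfl⟩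
  obtain ⟨l, hl, hp, hlen⟩ := Nat.sInf_mem hne
  exact ⟨l, hl, hp, hlen⟩

theorem len_inv (D : RootData V) {w : V ≃ₗᵢ[ℝ] V} (hw : w ∈ D.Weyl) :
    D.len w⁻¹ = D.len w := by
  have key : ∀ u : V ≃ₗᵢ[ℝ] V, u ∈ D.Weyl → D.len u⁻¹ ≤ D.len u := by
    intro u hu
    obtain ⟨l, hl, hp, hlen⟩ := D.exists_reduced hu
    have := D.len_le_word (sword_reverse hl)
    rwa [sword_prod_reverse hl, hp, List.length_reverse, hlen] at this
  refine le_antisymm (key w hw) ?_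
  have := key w⁻¹ (inv_mem hw)
  rwa [inv_inv] at this

end RootData

end Statement10Aux2

section Statement10Aux3

set_option linter.unusedSectionVars false
set_option maxHeartbeats 1000000

variable {V : Type*} [NormedAddCommGroup V] [InnerProductSpace ℝ V] [FiniteDimensional ℝ V]

theorem liso_mul_apply (w u : V ≃ₗᵢ[ℝ] V) (x : V) : (w * u) x = w (u x) := rfl

theorem liso_one_apply (x : V) : (1 : V ≃ₗᵢ[ℝ] V) x = x := rfl

theorem liso_inv_apply_apply (w : V ≃ₗᵢ[ℝ] V) (x : V) : w⁻¹ (w x) = x := by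
  have h : (w⁻¹ * w) x = (1 : V ≃ₗᵢ[ℝ] V) x := by rw [inv_mul_cancel]
  rwa [liso_mul_apply] at h

theorem liso_apply_inv_apply (w : V ≃ₗᵢ[ℝ] V) (x : V) : w (w⁻¹ x) = x := by
  have h : (w * w⁻¹) x = (1 : V ≃ₗᵢ[ℝ] V) x := by rw [mul_inv_cancel]
  rwa [liso_mul_apply] at h

theorem liso_inner_inv_right (w : V ≃ₗᵢ[ℝ] V) (x y : V) : ⟪x, w y⟫ = ⟪w⁻¹ x, y⟫ := by
  conv_lhs => rw [← liso_apply_inv_apply w x]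
  exact w.inner_map_map _ _

namespace RootData

theorem weylGen_maps_R (D : RootData V) {S : Finset V} (hS : S ⊆ D.Pi) {w : V ≃ₗᵢ[ℝ] V}
    (hw : w ∈ weylGen S) :
    (∀ α ∈ D.R, w α ∈ D.R) ∧ (∀ α ∈ D.R, w⁻¹ α ∈ D.R) := by
  induction hw using Subgroup.closure_induction with
  | mem x hx =>
      obtain ⟨γ, hγ, rfl⟩ := hx
      have hγR : γ ∈ D.R := D.simple_mem_R (hS hγ)
      have key : ∀ α ∈ D.R, rRefl γ α ∈ D.R := by
        intro α hα
        rw [rRefl_apply]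
        exact D.reflect_mem γ hγR α hα
      exact ⟨key, by rw [rRefl_inv]; exact key⟩
  | one => exact ⟨fun α hα => hα, fun α hα => by rw [inv_one]; exact hα⟩
  | mul x y hx hy ihx ihy =>
      refine ⟨fun α hα => ?_, fun α hα => ?_⟩
      · rw [liso_mul_apply]; exact ihx.1 _ (ihy.1 α hα)
      · rw [mul_inv_rev, liso_mul_apply]; exact ihy.2 _ (ihx.2 α hα)
  | inv x hx ihx =>
      refine ⟨ihx.2, fun α hα => ?_⟩
      rw [inv_inv]; exact ihx.1 α hα

theorem weyl_maps_R (D : RootData V) {w : V ≃ₗᵢ[ℝ] V} (hw : w ∈ D.Weyl) {α : V}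
    (hα : α ∈ D.R) : w α ∈ D.R :=
  (D.weylGen_maps_R (le_refl D.Pi) hw).1 α hα

/-- `α` is an indivisible positive root. -/
def indiv (D : RootData V) (α : V) : Prop := α ∈ D.Rpos ∧ (2⁻¹ : ℝ) • α ∉ D.R

theorem indiv_map (D : RootData V) {w : V ≃ₗᵢ[ℝ] V} (hw : w ∈ D.Weyl) {α : V}
    (hα : D.indiv α) (hpos : w α ∈ D.Rpos) : D.indiv (w α) := by
  refine ⟨hpos, fun hhalf => ?_⟩
  have h2 : w⁻¹ ((2⁻¹ : ℝ) • (w α)) = (2⁻¹ : ℝ) • α := by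
    rw [LinearIsometryEquiv.map_smul, liso_inv_apply_apply]
  have := D.weyl_maps_R (inv_mem hw) hhalf
  rw [h2] at this
  exact hα.2 this

theorem indiv_neg_half (D : RootData V) {α : V} (hα : D.indiv α) :
    (2⁻¹ : ℝ) • (-α) ∉ D.R := by
  intro h
  have := D.neg_mem_R h
  rw [smul_neg, neg_neg] at this
  exact hα.2 this

/-- Key lemma: a positive root sent to a negative root by a simple reflection is a
multiple of the corresponding simple root. -/
theorem simple_mult (D : RootData V) {γ β : V} (hγ : γ ∈ D.Pi) (hβ : β ∈ D.Rpos)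
    (hneg : rRefl γ β ∉ D.Rpos) : ∃ e : ℝ, 0 < e ∧ β = e • γ := by
  set a : ℝ := 2 * ⟪β, γ⟫ / ⟪γ, γ⟫ with ha
  have hβR : β ∈ D.R := D.pos_subset hβ
  have hsR : rRefl γ β ∈ D.R := by
    rw [rRefl_apply]; exact D.reflect_mem γ (D.simple_mem_R hγ) β hβR
  have hnegR : -(rRefl γ β) ∈ D.Rpos := D.not_pos_neg hsR hneg
  obtain ⟨c, hc, hcrep⟩ := D.pos_comb β hβ
  obtain ⟨d, hd, hdrep⟩ := D.pos_comb _ hnegR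
  have hsum : ∑ δ ∈ D.Pi, (c δ + d δ) • δ = ∑ δ ∈ D.Pi, (if δ = γ then a else 0) • δ := by
    have h1 : ∑ δ ∈ D.Pi, (c δ + d δ) • δ = β + -(rRefl γ β) := by
      have hsplit : ∑ δ ∈ D.Pi, (c δ + d δ) • δ
          = (∑ δ ∈ D.Pi, c δ • δ) + ∑ δ ∈ D.Pi, d δ • δ := by
        rw [← Finset.sum_add_distrib]
        exact Finset.sum_congr rfl fun δ _ => add_smul _ _ _
      rw [hsplit, ← hcrep, ← hdrep]
    have h2 : ∑ δ ∈ D.Pi, (if δ = γ then a else 0) • δ = a • γ := by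
      rw [Finset.sum_eq_single γ]
      · rw [if_pos rfl]
      · intro δ _ hne; rw [if_neg hne, zero_smul]
      · intro h; exact absurd hγ h
    rw [h1, h2, rRefl_apply, ← ha]
    module
  have hcoef : ∀ δ ∈ D.Pi, δ ≠ γ → c δ = 0 := by
    intro δ hδ hne
    have := D.coeff_ext hsum hδ
    rw [if_neg hne] at this
    have := this
    nlinarith [hc δ, hd δ]
  have hβeq : β = c γ • γ := by
    rw [hcrep, Finset.sum_eq_single γ]
    · intro δ hδ hne; rw [hcoef δ hδ hne, zero_smul]
    · intro h; exact absurd hγ h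
  refine ⟨c γ, ?_, hβeq⟩
  have hfβ := D.fvec_pos hβ
  rw [hβeq, real_inner_smul_right] at hfβ
  have hfγ := D.inner_fvec_simple_pos hγ
  nlinarith

theorem simple_pos_of_not_mult (D : RootData V) {γ β : V} (hγ : γ ∈ D.Pi) (hβ : β ∈ D.Rpos)
    (h : ∀ e : ℝ, β ≠ e • γ) : rRefl γ β ∈ D.Rpos := by
  by_contra hneg
  obtain ⟨e, _, he⟩ := D.simple_mult hγ hβ hneg
  exact h e he

theorem mem_pos_of_pos_coeff (D : RootData V) {β : V} (hβ : β ∈ D.R) {c : V → ℝ}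
    (hrep : β = ∑ δ ∈ D.Pi, c δ • δ) {γ : V} (hγ : γ ∈ D.Pi) (hc : 0 < c γ) :
    β ∈ D.Rpos := by
  by_contra h
  obtain ⟨d, hd, hdrep⟩ := D.pos_comb (-β) (D.not_pos_neg hβ h)
  have hsum : ∑ δ ∈ D.Pi, (c δ + d δ) • δ = ∑ δ ∈ D.Pi, (fun _ => (0 : ℝ)) δ • δ := by
    have h1 : ∑ δ ∈ D.Pi, (c δ + d δ) • δ = β + -β := by
      have hsplit : ∑ δ ∈ D.Pi, (c δ + d δ) • δ
          = (∑ δ ∈ D.Pi, c δ • δ) + ∑ δ ∈ D.Pi, d δ • δ := by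
        rw [← Finset.sum_add_distrib]
        exact Finset.sum_congr rfl fun δ _ => add_smul _ _ _
      rw [hsplit, ← hrep, ← hdrep]
    simp [h1]
  have := D.coeff_ext hsum hγ
  nlinarith [hd γ]

/-- Existence of the indivisible positive root attached to a simple root. -/
theorem exists_gamma0 (D : RootData V) {γ : V} (hγ : γ ∈ D.Pi) :
    ∃ γ₀ : V, ∃ c : ℝ, D.indiv γ₀ ∧ 0 < c ∧ γ = c • γ₀ := by
  have hγR : γ ∈ D.R := D.simple_mem_R hγ
  have hγγ : ⟪γ, γ⟫ ≠ (0 : ℝ) := inner_self_ne_zero.mpr (D.simple_ne_zero hγ)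
  by_cases h : (2⁻¹ : ℝ) • γ ∈ D.R
  · refine ⟨(2⁻¹ : ℝ) • γ, 2, ⟨?_, ?_⟩, by norm_num, by rw [smul_smul]; norm_num⟩
    · rw [D.mem_Rpos_iff h, real_inner_smul_right]
      have := D.fvec_pos (D.simple_subset hγ)
      linarith
    · intro h4
      rw [smul_smul] at h4
      obtain ⟨n, hn⟩ := D.crystallographic γ hγR _ h4
      rw [real_inner_smul_left] at hn
      have hval : (n : ℝ) = 2⁻¹ * 2⁻¹ * 2 := by
        rw [← hn]; field_simp
      have : ((2 * n : ℤ) : ℝ) = 1 := by push_cast; linarith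
      have : (2 * n : ℤ) = 1 := by exact_mod_cast this
      omega
  · exact ⟨γ, 1, ⟨D.simple_subset hγ, h⟩, one_pos, (one_smul ℝ γ).symm⟩

/-- Uniqueness: an indivisible positive root proportional to an indivisible positive root
equals it. -/
theorem indiv_mult_eq (D : RootData V) {γ₀ α : V} (h0 : D.indiv γ₀) (hα : D.indiv α)
    {e : ℝ} (he : α = e • γ₀) : α = γ₀ := by
  have hαR : α ∈ D.R := D.pos_subset hα.1
  have h0R : γ₀ ∈ D.R := D.pos_subset h0.1
  have hg0 : γ₀ ≠ 0 := D.nonzero _ h0R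
  have hgg : (0:ℝ) < ⟪γ₀, γ₀⟫ := inner_self_pos' hg0
  have hf0 := D.fvec_pos h0.1
  have hfα := D.fvec_pos hα.1
  have hepos : 0 < e := by
    rw [he, real_inner_smul_right] at hfα
    nlinarith
  obtain ⟨m, hm⟩ := D.crystallographic γ₀ h0R α hαR
  obtain ⟨k, hk⟩ := D.crystallographic α hαR γ₀ h0R
  rw [he] at hm hk
  simp only [real_inner_smul_left, real_inner_smul_right] at hm hk
  have hmval : (m : ℝ) = 2 * e := by
    rw [← hm]; field_simp
  have hkval : (k : ℝ) * e = 2 := by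
    have hee : e ≠ 0 := ne_of_gt hepos
    rw [← hk]; field_simp
  have hmk : ((m * k : ℤ) : ℝ) = 4 := by
    push_cast
    have hee : e ≠ 0 := ne_of_gt hepos
    have : (m : ℝ) * ((k : ℝ) * e) = 2 * e * 2 := by rw [hmval, hkval]
    nlinarith
  have hmk4 : (m * k : ℤ) = 4 := by exact_mod_cast hmk
  have hmpos : 0 < m := by
    have : (0:ℝ) < (m:ℝ) := by rw [hmval]; linarith
    exact_mod_cast this
  have hkpos : 0 < k := by
    have : (0:ℝ) < (k:ℝ) := by
      have := hkval
      nlinarith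
    exact_mod_cast this
  have hm4 : m ≤ 4 := by nlinarith
  interval_cases m
  · -- m = 1, e = 1/2 : α = (1/2) γ₀, so γ₀ = 2 α and (1/2) γ₀ = α ∈ R contradicts h0.2? no:
    -- e = 1/2 means α = 2⁻¹ • γ₀ ∈ R, contradicting indivisibility of γ₀
    exfalso
    have he2 : e = 2⁻¹ := by
      have : (1 : ℝ) = 2 * e := by exact_mod_cast hmval
      linarith
    exact h0.2 (by rw [← he2, ← he]; exact hαR)
  · -- m = 2, e = 1
    have he1 : e = 1 := by
      have : (2 : ℝ) = 2 * e := by exact_mod_cast hmval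
      linarith
    rw [he, he1, one_smul]
  · -- m = 3 impossible
    exfalso; omega
  · -- m = 4, e = 2 : 2⁻¹ • α = γ₀ ∈ R contradicts indivisibility of α
    exfalso
    have he2 : e = 2 := by
      have : (4 : ℝ) = 2 * e := by exact_mod_cast hmval
      linarith
    refine hα.2 ?_
    have : (2⁻¹ : ℝ) • α = γ₀ := by
      rw [he, he2, smul_smul]; norm_num
    rw [this]; exact h0R

end RootData

end Statement10Aux3

section Statement10Aux4

set_option linter.unusedSectionVars false
set_option maxHeartbeats 1000000

variable {V : Type*} [NormedAddCommGroup V] [InnerProductSpace ℝ V] [FiniteDimensional ℝ V]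

namespace RootData

/-- The strong exchange condition. -/
theorem exchange (D : RootData V) (l : List (V ≃ₗᵢ[ℝ] V)) (hl : sword D.Pi l) {α : V}
    (hα : α ∈ D.Rpos) (hneg : l.prod α ∉ D.Rpos) :
    ∃ l', sword D.Pi l' ∧ l'.prod = l.prod * rRefl α ∧ l'.length + 1 = l.length := by
  induction l with
  | nil =>
      rw [List.prod_nil, liso_one_apply] at hneg
      exact absurd hα hneg
  | cons g t ih =>
      have ht : sword D.Pi t := fun x hx => hl x (List.mem_cons_of_mem g hx)
      obtain ⟨γ, hγ, hg⟩ := hl g List.mem_cons_self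
      by_cases hcase : t.prod α ∈ D.Rpos
      · subst hg
        rw [List.prod_cons, liso_mul_apply] at hneg
        obtain ⟨e, he, heq⟩ := D.simple_mult hγ hcase hneg
        have hconj : t.prod * rRefl α * (t.prod)⁻¹ = rRefl (t.prod α) := rRefl_conj _ _
        have hg2 : rRefl γ = t.prod * rRefl α * (t.prod)⁻¹ := by
          rw [hconj, heq, rRefl_smul (ne_of_gt he)]
        refine ⟨t, ht, ?_, by rw [List.length_cons]⟩
        rw [List.prod_cons, hg2, mul_assoc (t.prod * rRefl α) t.prod⁻¹ t.prod,
          inv_mul_cancel, mul_one, mul_assoc, rRefl_sq, mul_one]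
      · obtain ⟨l', hl', hprod, hlen⟩ := ih ht hcase
        exact ⟨g :: l', fun x hx => by
            rcases List.mem_cons.mp hx with rfl | hx'
            · exact ⟨γ, hγ, hg⟩
            · exact hl' x hx',
          by rw [List.prod_cons, List.prod_cons, hprod, mul_assoc],
          by rw [List.length_cons, List.length_cons, hlen]⟩

theorem descent (D : RootData V) {w : V ≃ₗᵢ[ℝ] V} (hw : w ∈ D.Weyl) {α : V}
    (hα : α ∈ D.Rpos) (hneg : w α ∉ D.Rpos) :
    w * rRefl α ∈ D.Weyl ∧ D.len (w * rRefl α) + 1 ≤ D.len w := by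
  obtain ⟨l, hl, hp, hlen⟩ := D.exists_reduced hw
  obtain ⟨l', hl', hp', hlen'⟩ := D.exchange l hl hα (by rwa [hp])
  rw [hp] at hp'
  constructor
  · rw [← hp']
    exact sword_prod_mem hl'
  · have := D.len_le_word hl'
    rw [hp'] at this
    omega

theorem ascent (D : RootData V) {w : V ≃ₗᵢ[ℝ] V} (hw : w ∈ D.Weyl) {α : V}
    (hα : α ∈ D.Rpos) (hws : w * rRefl α ∈ D.Weyl) (hpos : w α ∈ D.Rpos) :
    D.len w + 1 ≤ D.len (w * rRefl α) := by
  have h1 : (w * rRefl α) α ∉ D.Rpos := by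
    have h2 : (w * rRefl α) α = -(w α) := by
      rw [liso_mul_apply, rRefl_self, map_neg]
    rw [h2]
    apply D.not_mem_Rpos_of_nonpos
    rw [inner_neg_right]
    have := D.fvec_pos hpos
    linarith
  have := D.descent hws hα h1
  rw [mul_assoc, rRefl_sq, mul_one] at this
  exact this.2

theorem pos_of_pos_simples (D : RootData V) {w : V ≃ₗᵢ[ℝ] V} (hw : w ∈ D.Weyl)
    (h : ∀ γ ∈ D.Pi, w γ ∈ D.Rpos) {α : V} (hα : α ∈ D.Rpos) : w α ∈ D.Rpos := by
  obtain ⟨c, hc, hrep⟩ := D.pos_comb α hα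
  have hwα : w α = ∑ δ ∈ D.Pi, c δ • w δ := by
    rw [hrep, map_sum]
    exact Finset.sum_congr rfl fun δ _ => by rw [LinearIsometryEquiv.map_smul]
  have hmem : w α ∈ D.R := D.weyl_maps_R hw (D.pos_subset hα)
  rw [D.mem_Rpos_iff hmem, hwα, inner_sum]
  have hne : ∃ δ ∈ D.Pi, c δ ≠ 0 := by
    by_contra hno
    push_neg at hno
    have : α = 0 := by
      rw [hrep, Finset.sum_eq_zero]
      intro δ hδ
      rw [hno δ hδ, zero_smul]
    exact D.nonzero α (D.pos_subset hα) this
  obtain ⟨δ₀, hδ₀, hcδ₀⟩ := hne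
  refine Finset.sum_pos' (fun δ hδ => ?_) ⟨δ₀, hδ₀, ?_⟩
  · rw [real_inner_smul_right]
    exact mul_nonneg (hc δ) (le_of_lt (D.fvec_pos (h δ hδ)))
  · rw [real_inner_smul_right]
    exact mul_pos (lt_of_le_of_ne (hc δ₀) (Ne.symm hcδ₀)) (D.fvec_pos (h δ₀ hδ₀))

theorem eq_one_of_pos_simples (D : RootData V) {w : V ≃ₗᵢ[ℝ] V} (hw : w ∈ D.Weyl)
    (h : ∀ γ ∈ D.Pi, w γ ∈ D.Rpos) : w = 1 := by
  obtain ⟨l, hl, hp, hlen⟩ := D.exists_reduced hw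
  rcases l.eq_nil_or_concat with rfl | ⟨l', g, rfl⟩
  · rw [← hp, List.prod_nil]
  · exfalso
    obtain ⟨γ, hγ, rfl⟩ := hl g (by simp)
    have hl' : sword D.Pi l' := fun x hx => hl x (by simp [hx])
    have hprod : l'.prod = w * rRefl γ := by
      have h2 : l'.prod * rRefl γ = w := by rw [← List.prod_concat, hp]
      rw [← h2, mul_assoc, rRefl_sq, mul_one]
    have hmem : w * rRefl γ ∈ D.Weyl := hprod ▸ sword_prod_mem hl'
    have hasc := D.ascent hw (D.simple_subset hγ) hmem (h γ hγ)
    have hle : D.len (w * rRefl γ) ≤ l'.length := hprod ▸ D.len_le_word hl'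
    have hlc : (l'.concat (rRefl γ)).length = l'.length + 1 := by
      rw [List.length_concat]
    omega

end RootData

end Statement10Aux4

section Statement10Aux5

set_option linter.unusedSectionVars false
set_option maxHeartbeats 1000000

variable {V : Type*} [NormedAddCommGroup V] [InnerProductSpace ℝ V] [FiniteDimensional ℝ V]

namespace RootData

theorem rRefl_mem_weyl (D : RootData V) {γ : V} (hγ : γ ∈ D.Pi) : rRefl γ ∈ D.Weyl :=
  Subgroup.subset_closure ⟨γ, hγ, rfl⟩

theorem N_det_aux (D : RootData V) {u u' : V ≃ₗᵢ[ℝ] V} (hu : u ∈ D.Weyl) (hu' : u' ∈ D.Weyl)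
    (hiff : ∀ α, D.indiv α → (u α ∈ D.Rpos ↔ u' α ∈ D.Rpos))
    (hpos : ∀ γ ∈ D.Pi, u γ ∈ D.Rpos) : u = u' := by
  have h1 : u = 1 := D.eq_one_of_pos_simples hu hpos
  have hpos' : ∀ γ ∈ D.Pi, u' γ ∈ D.Rpos := by
    intro γ hγ
    obtain ⟨γ₀, c, h0, hc, hγ0⟩ := D.exists_gamma0 hγ
    have h2 : u' γ₀ ∈ D.Rpos := by
      rw [← hiff γ₀ h0, h1, liso_one_apply]
      exact h0.1
    have h3 : u' γ = c • (u' γ₀) := by rw [hγ0, LinearIsometryEquiv.map_smul]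
    have hmem : u' γ ∈ D.R := D.weyl_maps_R hu' (D.simple_mem_R hγ)
    rw [D.mem_Rpos_iff hmem, h3, real_inner_smul_right]
    exact mul_pos hc (D.fvec_pos h2)
  rw [h1, D.eq_one_of_pos_simples hu' hpos']

/-- A Weyl group element is determined by which indivisible positive roots it makes
negative. -/
theorem N_det (D : RootData V) :
    ∀ k : ℕ, ∀ u u' : V ≃ₗᵢ[ℝ] V, u ∈ D.Weyl → u' ∈ D.Weyl → D.len u ≤ k →
      (∀ α, D.indiv α → (u α ∈ D.Rpos ↔ u' α ∈ D.Rpos)) → u = u' := by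
  intro k
  induction k with
  | zero =>
      intro u u' hu hu' hk hiff
      by_cases hpos : ∀ γ ∈ D.Pi, u γ ∈ D.Rpos
      · exact D.N_det_aux hu hu' hiff hpos
      · exfalso
        push_neg at hpos
        obtain ⟨γ, hγ, hneg⟩ := hpos
        have := (D.descent hu (D.simple_subset hγ) hneg).2
        omega
  | succ n ih =>
      intro u u' hu hu' hk hiff
      by_cases hpos : ∀ γ ∈ D.Pi, u γ ∈ D.Rpos
      · exact D.N_det_aux hu hu' hiff hpos
      · push_neg at hpos
        obtain ⟨γ, hγ, hneg⟩ := hpos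
        obtain ⟨γ₀, c, h0, hc, hγ0⟩ := D.exists_gamma0 hγ
        have hfuγ : ⟪D.fvec, u γ⟫ ≤ 0 := by
          by_contra h
          push_neg at h
          exact hneg ((D.mem_Rpos_iff (D.weyl_maps_R hu (D.simple_mem_R hγ))).mpr h)
        have huγ₀ : u γ₀ ∉ D.Rpos := by
          apply D.not_mem_Rpos_of_nonpos
          have h3 : u γ = c • u γ₀ := by rw [hγ0, LinearIsometryEquiv.map_smul]
          rw [h3, real_inner_smul_right] at hfuγ
          nlinarith
        have hu'γ₀ : u' γ₀ ∉ D.Rpos := fun hp => huγ₀ ((hiff γ₀ h0).mpr hp)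
        have hu'γ : u' γ ∉ D.Rpos := by
          apply D.not_mem_Rpos_of_nonpos
          have h3 : u' γ = c • u' γ₀ := by rw [hγ0, LinearIsometryEquiv.map_smul]
          have h4 : ⟪D.fvec, u' γ₀⟫ ≤ 0 := by
            by_contra h
            push_neg at h
            exact hu'γ₀ ((D.mem_Rpos_iff (D.weyl_maps_R hu' (D.pos_subset h0.1))).mpr h)
          rw [h3, real_inner_smul_right]
          nlinarith
        have hd := D.descent hu (D.simple_subset hγ) hneg
        have hd' := D.descent hu' (D.simple_subset hγ) hu'γ
        have hiff2 : ∀ α, D.indiv α →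
            ((u * rRefl γ) α ∈ D.Rpos ↔ (u' * rRefl γ) α ∈ D.Rpos) := by
          intro α hαind
          by_cases hmult : ∃ e : ℝ, α = e • γ
          · have hαγ₀ : α = γ₀ := by
              obtain ⟨e, he⟩ := hmult
              exact D.indiv_mult_eq h0 hαind (by rw [he, hγ0, smul_smul])
            subst hαγ₀
            have e1 : (u * rRefl γ) α = -(u α) := by
              rw [liso_mul_apply, hγ0, rRefl_smul (ne_of_gt hc), rRefl_self, map_neg]
            have e2 : (u' * rRefl γ) α = -(u' α) := by
              rw [liso_mul_apply, hγ0, rRefl_smul (ne_of_gt hc), rRefl_self, map_neg]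
            rw [e1, e2]
            have p1 : -(u α) ∈ D.Rpos :=
              D.not_pos_neg (D.weyl_maps_R hu (D.pos_subset hαind.1)) huγ₀
            have p2 : -(u' α) ∈ D.Rpos :=
              D.not_pos_neg (D.weyl_maps_R hu' (D.pos_subset hαind.1)) hu'γ₀
            exact iff_of_true p1 p2
          · push_neg at hmult
            have hsγα : rRefl γ α ∈ D.Rpos := D.simple_pos_of_not_mult hγ hαind.1 hmult
            have hind2 : D.indiv (rRefl γ α) :=
              D.indiv_map (D.rRefl_mem_weyl hγ) hαind hsγα
            have := hiff _ hind2
            rw [liso_mul_apply, liso_mul_apply]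
            exact this
        have hlen2 : D.len (u * rRefl γ) ≤ n := by
          have := hd.2
          omega
        have := ih (u * rRefl γ) (u' * rRefl γ) hd.1 hd'.1 hlen2 hiff2
        exact mul_right_cancel this

end RootData

end Statement10Aux5

section Statement10Aux6

set_option linter.unusedSectionVars false
set_option maxHeartbeats 1000000

variable {V : Type*} [NormedAddCommGroup V] [InnerProductSpace ℝ V] [FiniteDimensional ℝ V]

namespace RootData

theorem weylP_le_weyl (D : RootData V) {I : Finset V} (hI : I ⊆ D.Pi) :
    D.WeylP I ≤ D.Weyl := by
  apply Subgroup.closure_mono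
  rintro w ⟨γ, hγ, rfl⟩
  exact ⟨γ, hI hγ, rfl⟩

theorem fw_orth_spanI (D : RootData V) {I : Finset V} (hI : I ⊆ D.Pi) {γ : V}
    (hγ : γ ∈ D.Pi) (hγI : γ ∉ I) {x : V} (hx : x ∈ Submodule.span ℝ (I : Set V)) :
    ⟪D.fw γ, x⟫ = 0 := by
  induction hx using Submodule.span_induction with
  | mem β hβ =>
      have hβI : β ∈ I := hβ
      have := D.inner_fw hγ (hI hβI)
      rwa [if_neg (fun h : γ = β => hγI (h ▸ hβI))] at this
  | zero => exact inner_zero_right _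
  | add x y _ _ hx hy => rw [inner_add_right, hx, hy, add_zero]
  | smul c x _ hx => rw [real_inner_smul_right, hx, mul_zero]

theorem coeff_zero_off_I (D : RootData V) {I : Finset V} (hI : I ⊆ D.Pi) {β : V}
    {c : V → ℝ} (hrep : β = ∑ δ ∈ D.Pi, c δ • δ)
    (hspan : β ∈ Submodule.span ℝ (I : Set V)) {δ : V} (hδ : δ ∈ D.Pi) (hδI : δ ∉ I) :
    c δ = 0 := by
  have h1 : ⟪D.fw δ, β⟫ = c δ * (⟪δ, δ⟫ / 2) := by rw [hrep]; exact D.pair_sum c hδ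
  rw [D.fw_orth_spanI hI hδ hδI hspan] at h1
  have hδδ : ⟪δ, δ⟫ / 2 ≠ (0 : ℝ) := by
    have : (0:ℝ) < ⟪δ, δ⟫ := inner_self_pos' (D.simple_ne_zero hδ)
    positivity
  have := h1.symm
  exact (mul_eq_zero.mp this).resolve_right hδδ

theorem wI_stable (D : RootData V) {I : Finset V} (hI : I ⊆ D.Pi) {w : V ≃ₗᵢ[ℝ] V}
    (hw : w ∈ D.WeylP I) :
    ((∀ x ∈ Submodule.span ℝ (I : Set V), w x ∈ Submodule.span ℝ (I : Set V)) ∧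
      (∀ α ∈ D.Rpos, α ∉ Submodule.span ℝ (I : Set V) → w α ∈ D.Rpos)) ∧
    ((∀ x ∈ Submodule.span ℝ (I : Set V), w⁻¹ x ∈ Submodule.span ℝ (I : Set V)) ∧
      (∀ α ∈ D.Rpos, α ∉ Submodule.span ℝ (I : Set V) → w⁻¹ α ∈ D.Rpos)) := by
  induction hw using Subgroup.closure_induction with
  | mem g hg =>
      obtain ⟨γ, hγI, rfl⟩ := hg
      have hγPi : γ ∈ D.Pi := hI hγI
      have main : (∀ x ∈ Submodule.span ℝ (I : Set V),
          rRefl γ x ∈ Submodule.span ℝ (I : Set V)) ∧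
          (∀ α ∈ D.Rpos, α ∉ Submodule.span ℝ (I : Set V) → rRefl γ α ∈ D.Rpos) := by
        constructor
        · intro x hx
          rw [rRefl_apply]
          exact Submodule.sub_mem _ hx
            (Submodule.smul_mem _ _ (Submodule.subset_span hγI))
        · intro α hα hout
          obtain ⟨c, hc, hrep⟩ := D.pos_comb α hα
          have hex : ∃ δ ∈ D.Pi, δ ∉ I ∧ 0 < c δ := by
            by_contra h
            push_neg at h
            apply hout
            rw [hrep]
            refine Submodule.sum_mem _ fun δ hδ => ?_
            by_cases hδI : δ ∈ I
            · exact Submodule.smul_mem _ _ (Submodule.subset_span hδI)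
            · have h0 : c δ = 0 := le_antisymm (h δ hδ hδI) (hc δ)
              rw [h0, zero_smul]
              exact Submodule.zero_mem _
          obtain ⟨δ₀, hδ₀Pi, hδ₀I, hcδ₀⟩ := hex
          have hrep2 : rRefl γ α =
              ∑ δ ∈ D.Pi, (c δ - (if δ = γ then 2 * ⟪α, γ⟫ / ⟪γ, γ⟫ else 0)) • δ := by
            have hsplit : ∑ δ ∈ D.Pi, (c δ - (if δ = γ then 2 * ⟪α, γ⟫ / ⟪γ, γ⟫ else 0)) • δ
                = (∑ δ ∈ D.Pi, c δ • δ)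
                  - ∑ δ ∈ D.Pi, (if δ = γ then 2 * ⟪α, γ⟫ / ⟪γ, γ⟫ else 0) • δ := by
              rw [← Finset.sum_sub_distrib]
              exact Finset.sum_congr rfl fun δ _ => sub_smul _ _ _
            have hite : ∑ δ ∈ D.Pi, (if δ = γ then 2 * ⟪α, γ⟫ / ⟪γ, γ⟫ else 0) • δ
                = (2 * ⟪α, γ⟫ / ⟪γ, γ⟫) • γ := by
              rw [Finset.sum_eq_single γ]
              · rw [if_pos rfl]
              · intro δ _ hne; rw [if_neg hne, zero_smul]
              · intro h; exact absurd hγPi h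
            rw [rRefl_apply, hsplit, hite, ← hrep]
          have hRmem : rRefl γ α ∈ D.R :=
            D.weyl_maps_R (D.rRefl_mem_weyl hγPi) (D.pos_subset hα)
          refine D.mem_pos_of_pos_coeff hRmem hrep2 hδ₀Pi ?_
          rw [if_neg (fun h : δ₀ = γ => hδ₀I (h ▸ hγI)), sub_zero]
          exact hcδ₀
      exact ⟨main, by rw [rRefl_inv]; exact main⟩
  | one =>
      refine ⟨⟨fun x hx => hx, fun α hα _ => hα⟩, ?_⟩
      rw [inv_one]
      exact ⟨fun x hx => hx, fun α hα _ => hα⟩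
  | mul x y hx hy ihx ihy =>
      constructor
      · constructor
        · intro z hz
          rw [liso_mul_apply]
          exact ihx.1.1 _ (ihy.1.1 z hz)
        · intro α hα hout
          rw [liso_mul_apply]
          have hyα : y α ∈ D.Rpos := ihy.1.2 α hα hout
          have hyspan : y α ∉ Submodule.span ℝ (I : Set V) := by
            intro hin
            have := ihy.2.1 _ hin
            rw [liso_inv_apply_apply] at this
            exact hout this
          exact ihx.1.2 _ hyα hyspan
      · rw [mul_inv_rev]
        constructor
        · intro z hz
          rw [liso_mul_apply]
          exact ihy.2.1 _ (ihx.2.1 z hz)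
        · intro α hα hout
          rw [liso_mul_apply]
          have hxα : x⁻¹ α ∈ D.Rpos := ihx.2.2 α hα hout
          have hxspan : x⁻¹ α ∉ Submodule.span ℝ (I : Set V) := by
            intro hin
            have := ihx.1.1 _ hin
            rw [liso_apply_inv_apply] at this
            exact hout this
          exact ihy.2.2 _ hxα hxspan
  | inv x hx ihx =>
      refine ⟨ihx.2, ?_⟩
      rw [inv_inv]
      exact ihx.1

theorem wI_span (D : RootData V) {I : Finset V} (hI : I ⊆ D.Pi) {w : V ≃ₗᵢ[ℝ] V}
    (hw : w ∈ D.WeylP I) {x : V} (hx : x ∈ Submodule.span ℝ (I : Set V)) :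
    w x ∈ Submodule.span ℝ (I : Set V) :=
  (D.wI_stable hI hw).1.1 x hx

theorem wI_pos_out (D : RootData V) {I : Finset V} (hI : I ⊆ D.Pi) {w : V ≃ₗᵢ[ℝ] V}
    (hw : w ∈ D.WeylP I) {α : V} (hα : α ∈ D.Rpos)
    (hout : α ∉ Submodule.span ℝ (I : Set V)) : w α ∈ D.Rpos :=
  (D.wI_stable hI hw).1.2 α hα hout

theorem wI_not_span (D : RootData V) {I : Finset V} (hI : I ⊆ D.Pi) {w : V ≃ₗᵢ[ℝ] V}
    (hw : w ∈ D.WeylP I) {x : V} (hx : x ∉ Submodule.span ℝ (I : Set V)) :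
    w x ∉ Submodule.span ℝ (I : Set V) := by
  intro hin
  have := (D.wI_stable hI hw).2.1 _ hin
  rw [liso_inv_apply_apply] at this
  exact hx this


/-- Finding a simple root in `I` not orthogonal to a parabolic positive root, with the
reflected root data. -/
theorem refl_mem_WI_aux (D : RootData V) {I : Finset V} (hI : I ⊆ D.Pi) {β : V}
    (hβ : β ∈ D.Rpos) (hspan : β ∈ Submodule.span ℝ (I : Set V)) :
    ∃ γ ∈ I, 0 < ⟪β, γ⟫ ∧
      ((∃ e : ℝ, 0 < e ∧ β = e • γ) ∨
        ∃ β', β' ∈ D.Rpos ∧ β' ∈ Submodule.span ℝ (I : Set V) ∧ β = rRefl γ β' ∧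
          (D.Rpos.filter (fun δ => ⟪D.fvec, δ⟫ < ⟪D.fvec, β'⟫)).card <
            (D.Rpos.filter (fun δ => ⟪D.fvec, δ⟫ < ⟪D.fvec, β⟫)).card) := by
  obtain ⟨c, hc, hrep⟩ := D.pos_comb β hβ
  have hββ : (0:ℝ) < ⟪β, β⟫ := inner_self_pos' (D.nonzero β (D.pos_subset hβ))
  have h1 : (⟪β, β⟫:ℝ) = ∑ δ ∈ D.Pi, c δ * ⟪β, δ⟫ := by
    have h := congrArg (fun y => (⟪β, y⟫ : ℝ)) hrep
    rw [h, inner_sum]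
    exact Finset.sum_congr rfl fun δ _ => real_inner_smul_right _ _ _
  have hex : ∃ δ ∈ D.Pi, 0 < c δ * ⟪β, δ⟫ := by
    by_contra h
    push_neg at h
    have : ∑ δ ∈ D.Pi, c δ * ⟪β, δ⟫ ≤ 0 := Finset.sum_nonpos h
    linarith
  obtain ⟨γ, hγPi, hprod⟩ := hex
  have hcγ : 0 < c γ := by
    rcases (hc γ).lt_or_eq with h | h
    · exact h
    · exfalso
      rw [← h, zero_mul] at hprod
      exact lt_irrefl 0 hprod
  have hβγ : 0 < ⟪β, γ⟫ := by nlinarith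
  have hγI : γ ∈ I := by
    by_contra hγI
    have := D.coeff_zero_off_I hI hrep hspan hγPi hγI
    rw [this] at hcγ
    exact lt_irrefl 0 hcγ
  refine ⟨γ, hγI, hβγ, ?_⟩
  by_cases hmult : ∃ e : ℝ, β = e • γ
  · left
    obtain ⟨e, he⟩ := hmult
    refine ⟨e, ?_, he⟩
    have hfβ := D.fvec_pos hβ
    have hfγ := D.inner_fvec_simple_pos hγPi
    rw [he, real_inner_smul_right] at hfβ
    nlinarith
  · right
    push_neg at hmult
    have hβ'pos : rRefl γ β ∈ D.Rpos := D.simple_pos_of_not_mult hγPi hβ hmult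
    have hγspan : γ ∈ Submodule.span ℝ (I : Set V) := Submodule.subset_span hγI
    have hβ'span : rRefl γ β ∈ Submodule.span ℝ (I : Set V) := by
      rw [rRefl_apply]
      exact Submodule.sub_mem _ hspan (Submodule.smul_mem _ _ hγspan)
    have hback : β = rRefl γ (rRefl γ β) := by
      have h2 : (rRefl γ * rRefl γ) β = (1 : V ≃ₗᵢ[ℝ] V) β := by rw [rRefl_sq]
      rw [liso_mul_apply, liso_one_apply] at h2
      exact h2.symm
    have hflt : ⟪D.fvec, rRefl γ β⟫ < ⟪D.fvec, β⟫ := by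
      rw [rRefl_apply, inner_sub_right, real_inner_smul_right]
      have hγγ : (0:ℝ) < ⟪γ, γ⟫ := inner_self_pos' (D.simple_ne_zero hγPi)
      have hfγ := D.inner_fvec_simple_pos hγPi
      have ha : 0 < 2 * ⟪β, γ⟫ / ⟪γ, γ⟫ := by positivity
      nlinarith
    refine ⟨rRefl γ β, hβ'pos, hβ'span, hback, ?_⟩
    apply Finset.card_lt_card
    have hsub : D.Rpos.filter (fun δ => ⟪D.fvec, δ⟫ < ⟪D.fvec, rRefl γ β⟫) ⊆
        D.Rpos.filter (fun δ => ⟪D.fvec, δ⟫ < ⟪D.fvec, β⟫) := by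
      intro δ hδ
      rw [Finset.mem_filter] at hδ ⊢
      exact ⟨hδ.1, hδ.2.trans hflt⟩
    refine (Finset.ssubset_iff_of_subset hsub).mpr ⟨rRefl γ β, ?_, ?_⟩
    · rw [Finset.mem_filter]
      exact ⟨hβ'pos, hflt⟩
    · intro hmem
      rw [Finset.mem_filter] at hmem
      exact lt_irrefl _ hmem.2

/-- The reflection in any positive root of the parabolic subsystem lies in `W_I`. -/
theorem refl_mem_WI (D : RootData V) {I : Finset V} (hI : I ⊆ D.Pi) :
    ∀ N : ℕ, ∀ β : V, β ∈ D.Rpos → β ∈ Submodule.span ℝ (I : Set V) →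
      (D.Rpos.filter (fun δ => ⟪D.fvec, δ⟫ < ⟪D.fvec, β⟫)).card ≤ N →
      rRefl β ∈ D.WeylP I := by
  intro N
  induction N with
  | zero =>
      intro β hβ hspan hcard
      obtain ⟨γ, hγI, hβγ, hmult⟩ := D.refl_mem_WI_aux hI hβ hspan
      rcases hmult with ⟨e, he, rfl⟩ | hne
      · rw [rRefl_smul (ne_of_gt he)]
        exact Subgroup.subset_closure ⟨γ, hγI, rfl⟩
      · exfalso
        obtain ⟨β', hβ'pos, _, _, hcard'⟩ := hne
        omega
  | succ n ih =>
      intro β hβ hspan hcard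
      obtain ⟨γ, hγI, hβγ, hmult⟩ := D.refl_mem_WI_aux hI hβ hspan
      rcases hmult with ⟨e, he, rfl⟩ | hne
      · rw [rRefl_smul (ne_of_gt he)]
        exact Subgroup.subset_closure ⟨γ, hγI, rfl⟩
      · obtain ⟨β', hβ'pos, hβ'span, hββ', hcard'⟩ := hne
        have hmem' : rRefl β' ∈ D.WeylP I := ih β' hβ'pos hβ'span (by omega)
        rw [hββ']
        rw [← rRefl_conj (rRefl γ) β']
        exact mul_mem (mul_mem (Subgroup.subset_closure ⟨γ, hγI, rfl⟩) hmem')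
          (inv_mem (Subgroup.subset_closure ⟨γ, hγI, rfl⟩))

end RootData

end Statement10Aux6

section Statement10Aux7

set_option linter.unusedSectionVars false
set_option maxHeartbeats 1000000

variable {V : Type*} [NormedAddCommGroup V] [InnerProductSpace ℝ V] [FiniteDimensional ℝ V]

namespace RootData

theorem indiv_neg_map (D : RootData V) {w : V ≃ₗᵢ[ℝ] V} (hw : w ∈ D.Weyl) {α : V}
    (hα : D.indiv α) (hneg : w α ∉ D.Rpos) : D.indiv (-(w α)) := by
  have hwαR : w α ∈ D.R := D.weyl_maps_R hw (D.pos_subset hα.1)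
  refine ⟨D.not_pos_neg hwαR hneg, fun hhalf => ?_⟩
  have h2 : w⁻¹ ((2⁻¹ : ℝ) • -(w α)) = (2⁻¹ : ℝ) • -α := by
    rw [smul_neg, map_neg, LinearIsometryEquiv.map_smul, liso_inv_apply_apply, smul_neg]
  have h3 := D.weyl_maps_R (inv_mem hw) hhalf
  rw [h2] at h3
  have h4 := D.neg_mem_R h3
  rw [smul_neg, neg_neg] at h4
  exact hα.2 h4

end RootData

end Statement10Aux7

/-- Let `λ ∈ P_I^+`, let `w₀^{I,λ}` be the longest element of the
stabilizer `W_{I,λ}` of `λ` in `W_I`, and let `w₀^I` be the longest element of `W_I`.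
Then `λ̃ = w₀^{I,λ}(λ − w₀^I v(w₀^I λ)⁻¹ ρ(k))`, where `λ̃ = λ - v(λ)⁻¹ρ(k)`;
equivalently, `v(λ) = v(w₀^I λ) w₀^I w₀^{I,λ}`. -/
theorem statement_10 (D : RootData V) (I : Finset V) (hI : I ⊆ D.Pi)
    (k : V → ℝ) (hk0 : ∀ α ∈ D.R, 0 ≤ k α)
    (hkW : ∀ w ∈ D.Weyl, ∀ α ∈ D.R, k (w α) = k α)
    (lam : V) (hlam : lam ∈ D.PplusI I)
    (w0Il : V ≃ₗᵢ[ℝ] V)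
    (hw0Il : w0Il ∈ D.WeylP I ∧ w0Il lam = lam ∧
      ∀ u ∈ D.WeylP I, u lam = lam → D.len u ≤ D.len w0Il)
    (w0I : V ≃ₗᵢ[ℝ] V)
    (hw0I : w0I ∈ D.WeylP I ∧ ∀ u ∈ D.WeylP I, D.len u ≤ D.len w0I)
    (vl : V ≃ₗᵢ[ℝ] V) (hvl : D.IsVmin lam vl)
    (v1 : V ≃ₗᵢ[ℝ] V) (hv1 : D.IsVmin (w0I lam) v1) :
    lam - vl⁻¹ (D.rho k) = w0Il (lam - w0I (v1⁻¹ (D.rho k))) ∧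
    vl = v1 * w0I * w0Il := by
  classical
  obtain ⟨hw0Il_mem, hw0Il_fix, hw0Il_max⟩ := hw0Il
  obtain ⟨hw0I_mem, hw0I_max⟩ := hw0I
  obtain ⟨hvl_mem, hvl_anti, hvl_min⟩ := hvl
  obtain ⟨hv1_mem, hv1_anti, hv1_min⟩ := hv1
  have hWle := D.weylP_le_weyl hI
  have hw0IlW : w0Il ∈ D.Weyl := hWle hw0Il_mem
  have hw0IW : w0I ∈ D.Weyl := hWle hw0I_mem
  have hdomI : ∀ α ∈ D.Rpos, α ∈ Submodule.span ℝ (I : Set V) → 0 ≤ ⟪lam, α⟫ := by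
    intro α h1 h2
    exact hlam.2 α ⟨h1, h2⟩
  have hw0Il_fix' : w0Il⁻¹ lam = lam := by
    conv_lhs => rw [← hw0Il_fix]
    rw [liso_inv_apply_apply]
  have hinner : ∀ α : V, ⟪w0I lam, w0I (w0Il α)⟫ = ⟪lam, α⟫ := by
    intro α
    rw [w0I.inner_map_map]
    conv_lhs => rw [← hw0Il_fix]
    exact w0Il.inner_map_map lam α
  -- Characterization of maximal-length elements of W_I (inversion sets).
  have charA : ∀ w : V ≃ₗᵢ[ℝ] V, w ∈ D.WeylP I →
      (∀ v ∈ D.WeylP I, D.len v ≤ D.len w) →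
      ∀ α, D.indiv α →
        (w α ∈ D.Rpos ↔ α ∉ Submodule.span ℝ (I : Set V)) := by
    intro w hwmem hwmax α hind
    constructor
    · intro hpos hspan
      have hrefl : rRefl α ∈ D.WeylP I :=
        D.refl_mem_WI hI _ α hind.1 hspan (le_refl _)
      have hw2 : w * rRefl α ∈ D.WeylP I := mul_mem hwmem hrefl
      have hasc := D.ascent (hWle hwmem) hind.1 (hWle hw2) hpos
      have := hwmax _ hw2
      omega
    · intro hspan
      exact D.wI_pos_out hI hwmem hind.1 hspan
  -- Characterization of maximal-length stabilizer elements of W_{I,λ}.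
  have charB : ∀ w : V ≃ₗᵢ[ℝ] V, w ∈ D.WeylP I → w lam = lam →
      (∀ v ∈ D.WeylP I, v lam = lam → D.len v ≤ D.len w) →
      ∀ α, D.indiv α →
        (w α ∈ D.Rpos ↔ ¬(α ∈ Submodule.span ℝ (I : Set V) ∧ ⟪lam, α⟫ = 0)) := by
    intro w hwmem hwfix hwmax α hind
    constructor
    · intro hpos hcond
      obtain ⟨hαspan, hαperp⟩ := hcond
      have hrefl : rRefl α ∈ D.WeylP I :=
        D.refl_mem_WI hI _ α hind.1 hαspan (le_refl _)
      have hw2 : w * rRefl α ∈ D.WeylP I := mul_mem hwmem hrefl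
      have hw2fix : (w * rRefl α) lam = lam := by
        rw [liso_mul_apply, rRefl_fix hαperp, hwfix]
      have hasc := D.ascent (hWle hwmem) hind.1 (hWle hw2) hpos
      have := hwmax _ hw2 hw2fix
      omega
    · intro hcond
      by_cases hspan : α ∈ Submodule.span ℝ (I : Set V)
      · have hne : ⟪lam, α⟫ ≠ 0 := fun h => hcond ⟨hspan, h⟩
        by_contra hneg
        have hwαR : w α ∈ D.R := D.weyl_maps_R (hWle hwmem) (D.pos_subset hind.1)
        have hnegpos : -(w α) ∈ D.Rpos := D.not_pos_neg hwαR hneg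
        have hnegspan : -(w α) ∈ Submodule.span ℝ (I : Set V) :=
          Submodule.neg_mem _ (D.wI_span hI hwmem hspan)
        have h1 : ⟪lam, w α⟫ = ⟪lam, α⟫ := by
          conv_lhs => rw [← hwfix]
          exact w.inner_map_map lam α
        have h2 : 0 ≤ ⟪lam, -(w α)⟫ := hdomI _ hnegpos hnegspan
        rw [inner_neg_right] at h2
        have h3 : 0 ≤ ⟪lam, α⟫ := hdomI _ hind.1 hspan
        exact hne (by linarith)
      · exact D.wI_pos_out hI hwmem hind.1 hspan
  -- the two longest elements are involutions
  have hA := charA w0I hw0I_mem hw0I_max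
  have hw0I_max' : ∀ v ∈ D.WeylP I, D.len v ≤ D.len w0I⁻¹ := by
    intro v hv
    rw [D.len_inv hw0IW]
    exact hw0I_max v hv
  have hAinv := charA w0I⁻¹ (inv_mem hw0I_mem) hw0I_max'
  have hw0I_inv : w0I⁻¹ = w0I :=
    D.N_det (D.len w0I⁻¹) _ _ (inv_mem hw0IW) hw0IW (le_refl _)
      (fun α hind => by rw [hAinv α hind, hA α hind])
  have hB := charB w0Il hw0Il_mem hw0Il_fix hw0Il_max
  have hw0Il_max' : ∀ v ∈ D.WeylP I, v lam = lam → D.len v ≤ D.len w0Il⁻¹ := by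
    intro v hv hvfix
    rw [D.len_inv hw0IlW]
    exact hw0Il_max v hv hvfix
  have hBinv := charB w0Il⁻¹ (inv_mem hw0Il_mem) hw0Il_fix' hw0Il_max'
  have hw0Il_inv : w0Il⁻¹ = w0Il :=
    D.N_det (D.len w0Il⁻¹) _ _ (inv_mem hw0IlW) hw0IlW (le_refl _)
      (fun α hind => by rw [hBinv α hind, hB α hind])
  -- minimality property of IsVmin elements
  have hProp : ∀ (mu : V) (w : V ≃ₗᵢ[ℝ] V), w ∈ D.Weyl → D.AntiDominant (w mu) →
      (∀ v ∈ D.Weyl, D.AntiDominant (v mu) → D.len w ≤ D.len v) →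
      ∀ α, D.indiv α → ⟪mu, α⟫ = 0 → w α ∈ D.Rpos := by
    intro mu w hw hanti hmin α hind hperp
    by_contra hneg
    obtain ⟨hmem2, hlen2⟩ := D.descent hw hind.1 hneg
    have hfix : (w * rRefl α) mu = w mu := by rw [liso_mul_apply, rRefl_fix hperp]
    have : D.len w ≤ D.len (w * rRefl α) := by
      refine hmin _ hmem2 ?_
      rw [show ((w * rRefl α) : V ≃ₗᵢ[ℝ] V) = w * rRefl α from rfl]
      intro β hβ
      rw [hfix]
      exact hanti β hβ
    omega
  -- determination of the inversion set of a minimal antidominant-maker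
  have hdet : ∀ w : V ≃ₗᵢ[ℝ] V, w ∈ D.Weyl → D.AntiDominant (w lam) →
      (∀ α, D.indiv α → ⟪lam, α⟫ = 0 → w α ∈ D.Rpos) →
      ∀ α, D.indiv α → (w α ∈ D.Rpos ↔ ⟪lam, α⟫ ≤ 0) := by
    intro w hw hanti hprop α hind
    have hwαR : w α ∈ D.R := D.weyl_maps_R hw (D.pos_subset hind.1)
    have hinner2 : ⟪w lam, w α⟫ = ⟪lam, α⟫ := w.inner_map_map _ _
    rcases lt_trichotomy (⟪lam, α⟫ : ℝ) 0 with h | h | h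
    · refine iff_of_true ?_ (le_of_lt h)
      by_contra hneg
      have := hanti _ (D.not_pos_neg hwαR hneg)
      rw [inner_neg_right, hinner2] at this
      linarith
    · exact iff_of_true (hprop α hind h) (le_of_eq h)
    · refine iff_of_false ?_ (by linarith)
      intro hpos
      have := hanti _ hpos
      rw [hinner2] at this
      linarith
  set u : V ≃ₗᵢ[ℝ] V := v1 * w0I * w0Il with hu
  have hu_mem : u ∈ D.Weyl := mul_mem (mul_mem hv1_mem hw0IW) hw0IlW
  have hu_lam : u lam = v1 (w0I lam) := by
    rw [hu, liso_mul_apply, hw0Il_fix, liso_mul_apply]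
  have hu_anti : D.AntiDominant (u lam) := by
    intro β hβ
    rw [hu_lam]
    exact hv1_anti β hβ
  have hv1_prop := hProp (w0I lam) v1 hv1_mem hv1_anti hv1_min
  have hvl_prop := hProp lam vl hvl_mem hvl_anti hvl_min
  have hu_prop : ∀ α, D.indiv α → ⟪lam, α⟫ = 0 → u α ∈ D.Rpos := by
    intro α hind hperp
    have huα : u α = v1 (w0I (w0Il α)) := by
      rw [hu, liso_mul_apply, liso_mul_apply]
    have hmid_ind_pos : w0I (w0Il α) ∈ D.Rpos → D.indiv (w0I (w0Il α)) := by
      intro hmid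
      have := D.indiv_map (mul_mem hw0IW hw0IlW) hind
        (by rw [liso_mul_apply]; exact hmid)
      rwa [liso_mul_apply] at this
    have hperp2 : ⟪w0I lam, w0I (w0Il α)⟫ = 0 := by rw [hinner]; exact hperp
    by_cases hspan : α ∈ Submodule.span ℝ (I : Set V)
    · have hneg1 : w0Il α ∉ D.Rpos := fun hp => (hB α hind).mp hp ⟨hspan, hperp⟩
      have hβind : D.indiv (-(w0Il α)) := D.indiv_neg_map hw0IlW hind hneg1
      have hβspan : -(w0Il α) ∈ Submodule.span ℝ (I : Set V) :=
        Submodule.neg_mem _ (D.wI_span hI hw0Il_mem hspan)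
      have hAneg : w0I (-(w0Il α)) ∉ D.Rpos := fun hp => (hA _ hβind).mp hp hβspan
      have hmid : w0I (w0Il α) ∈ D.Rpos := by
        have hR : w0I (-(w0Il α)) ∈ D.R :=
          D.weyl_maps_R hw0IW (D.pos_subset hβind.1)
        have := D.not_pos_neg hR hAneg
        rwa [map_neg, neg_neg] at this
      have := hv1_prop _ (hmid_ind_pos hmid) hperp2
      rw [huα]
      exact this
    · have h1 : w0Il α ∈ D.Rpos := D.wI_pos_out hI hw0Il_mem hind.1 hspan
      have h1s : w0Il α ∉ Submodule.span ℝ (I : Set V) :=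
        D.wI_not_span hI hw0Il_mem hspan
      have h2 : w0I (w0Il α) ∈ D.Rpos := D.wI_pos_out hI hw0I_mem h1 h1s
      have := hv1_prop _ (hmid_ind_pos h2) hperp2
      rw [huα]
      exact this
  have hiff : ∀ α, D.indiv α → (vl α ∈ D.Rpos ↔ u α ∈ D.Rpos) := by
    intro α hind
    rw [hdet vl hvl_mem hvl_anti hvl_prop α hind, hdet u hu_mem hu_anti hu_prop α hind]
  have hmain : vl = u := D.N_det (D.len vl) vl u hvl_mem hu_mem (le_refl _) hiff
  refine ⟨?_, hmain⟩
  have h1 : vl⁻¹ (D.rho k) = w0Il (w0I (v1⁻¹ (D.rho k))) := by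
    rw [hmain, hu, mul_inv_rev, mul_inv_rev, hw0I_inv, hw0Il_inv, liso_mul_apply,
      liso_mul_apply]
  rw [h1, map_sub, hw0Il_fix]
end
end
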